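/- arXiv:1110.0605 — 3 statements merged into one kernel-verified Lean document; each statement's English description precedes it below -/
import Mathlib

section
/- Let 𝒦 be a class-locally presentable category and 𝒞 a cone-coreflective class of morphisms of 𝒦, and let λ be a regular cardinal such that every morphism in 𝒞 has λ-presentable domain and λ-presentable codomain. Then the class 𝒞^□ is closed under λ-filtered colimits in the morphism category 𝒦^→. -/
universe w₂ w₁ w v u u₁ u₂ u₃

open CategoryTheory CategoryTheory.Limits Opposite Order

namespace ClassAcc

/-- A category `J` is `κ`-filtered provided that every diagram in `J` with fewer than `κ`
morphisms admits a cocone. -/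
def IsCardinalFiltered (J : Type w) [Category.{w₁} J] (κ : Cardinal.{v}) : Prop :=
  ∀ (D : Type v) [SmallCategory D], Cardinal.mk (Σ (a : D) (b : D), a ⟶ b) < κ →
    ∀ (F : D ⥤ J), Nonempty (Cocone F)

/-- A category has `κ`-filtered colimits if it has colimits of all small `κ`-filtered shapes. -/
def HasCardinalFilteredColimits (κ : Cardinal.{v}) (K : Type u) [Category.{w} K] : Prop :=
  ∀ (J : Type v) [SmallCategory J], IsCardinalFiltered J κ → HasColimitsOfShape J K

/-- An object `X` is `κ`-presentable if `Hom(X, -)` preserves `κ`-filtered colimits. -/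
def IsPresentable (κ : Cardinal.{v}) {K : Type u} [Category.{w} K] (X : K) : Prop :=
  ∀ (J : Type v) [SmallCategory J], IsCardinalFiltered J κ →
    PreservesColimitsOfShape J (coyoneda.obj (op X))

/-- `X` is a `κ`-filtered colimit of `κ`-presentable objects. -/
def IsFilteredColimitOfPresentables (κ : Cardinal.{v}) {K : Type u} [Category.{w} K]
    (X : K) : Prop :=
  ∃ (J : Cat.{v, v}) (D : J ⥤ K) (c : Cocone D),
    IsCardinalFiltered (J : Type v) κ ∧ Nonempty (IsColimit c) ∧ c.pt = X ∧
      ∀ j, IsPresentable κ (D.obj j)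

/-- A category `K` is class-`κ`-accessible if it has `κ`-filtered colimits and every object
is a `κ`-filtered colimit of `κ`-presentable objects. -/
def ClassAccessible (κ : Cardinal.{v}) (K : Type u) [Category.{w} K] : Prop :=
  HasCardinalFilteredColimits κ K ∧ ∀ X : K, IsFilteredColimitOfPresentables κ X

/-- A class-`κ`-accessible category which is complete and cocomplete is
class-locally `κ`-presentable. -/
def ClassLocallyPresentable (κ : Cardinal.{v}) (K : Type u) [Category.{w} K] : Prop :=
  ClassAccessible κ K ∧ HasLimitsOfSize.{v, v} K ∧ HasColimitsOfSize.{v, v} K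

/-- A category is class-accessible if it is class-`κ`-accessible for some regular cardinal. -/
def IsClassAccessibleCat (K : Type u) [Category.{v} K] : Prop :=
  ∃ κ : Cardinal.{v}, κ.IsRegular ∧ ClassAccessible κ K

/-- A category is class-locally presentable if it is class-locally `κ`-presentable for some
regular cardinal `κ`. -/
def IsClassLocallyPresentableCat (K : Type u) [Category.{v} K] : Prop :=
  ∃ κ : Cardinal.{v}, κ.IsRegular ∧ ClassLocallyPresentable κ K

/-- A functor preserves `κ`-filtered colimits. -/
def PreservesCardinalFilteredColimits (κ : Cardinal.{v}) {K : Type u} [Category.{w} K]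
    {L : Type u₁} [Category.{w₁} L] (F : K ⥤ L) : Prop :=
  ∀ (J : Type v) [SmallCategory J], IsCardinalFiltered J κ → PreservesColimitsOfShape J F

/-- A class-`κ`-accessible functor between class-`κ`-accessible categories. -/
def ClassAccessibleFunctor (κ : Cardinal.{v}) {K : Type u} [Category.{w} K]
    {L : Type u₁} [Category.{w₁} L] (F : K ⥤ L) : Prop :=
  ClassAccessible κ K ∧ ClassAccessible κ L ∧ PreservesCardinalFilteredColimits κ F

/-- A strongly class-`κ`-accessible functor moreover preserves `κ`-presentable objects. -/
def StronglyClassAccessibleFunctor (κ : Cardinal.{v}) {K : Type u} [Category.{w} K]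
    {L : Type u₁} [Category.{w₁} L] (F : K ⥤ L) : Prop :=
  ClassAccessibleFunctor κ F ∧ ∀ X : K, IsPresentable κ X → IsPresentable κ (F.obj X)

/-- `F` is strongly class-accessible if it is strongly class-`κ`-accessible for some regular
cardinal `κ`. -/
def IsStronglyClassAccessibleFunctor {K : Type u} [Category.{v} K]
    {L : Type u₁} [Category.{v} L] (F : K ⥤ L) : Prop :=
  ∃ κ : Cardinal.{v}, κ.IsRegular ∧ StronglyClassAccessibleFunctor κ F

/-- A full subcategory (given by a predicate on objects) is closed under `κ`-filtered colimits. -/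
def ClosedUnderCardinalFilteredColimits (κ : Cardinal.{v}) {K : Type u} [Category.{w} K]
    (P : K → Prop) : Prop :=
  ∀ (J : Type v) [SmallCategory J], IsCardinalFiltered J κ →
    ∀ (D : J ⥤ K) (c : Cocone D), IsColimit c → (∀ j, P (D.obj j)) → P c.pt

/-- A full subcategory is strongly accessibly embedded if for some regular cardinal `κ` it is
closed under `κ`-filtered colimits and its inclusion preserves `κ`-presentable objects. -/
def StronglyAccessiblyEmbedded {K : Type u} [Category.{v} K] (P : K → Prop) : Prop :=
  ∃ κ : Cardinal.{v}, κ.IsRegular ∧ ClosedUnderCardinalFilteredColimits κ P ∧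
    ∀ X : ObjectProperty.FullSubcategory P, IsPresentable κ X → IsPresentable κ X.obj

end ClassAcc
namespace ClassAcc

/-- A class `C` of morphisms is cone-coreflective if for every morphism `f` there is a set
(indexed by a small type) of morphisms of `C` through which every morphism `g ⟶ f` of the
arrow category with `g ∈ C` factors. -/
def ConeCoreflective {K : Type u} [Category.{v} K] (C : MorphismProperty K) : Prop :=
  ∀ ⦃X Y : K⦄ (f : X ⟶ Y), ∃ (I : Type v) (S : I → Arrow K),
    (∀ i, C (S i).hom) ∧
    ∀ (g : Arrow K), C g.hom → ∀ (u : g ⟶ Arrow.mk f),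
      ∃ (i : I) (p : g ⟶ S i) (q : S i ⟶ Arrow.mk f), p ≫ q = u

/-- Stability under retracts in the arrow category. -/
def StableUnderRetracts {K : Type u} [Category.{v} K] (S : MorphismProperty K) : Prop :=
  ∀ ⦃X Y X' Y' : K⦄ (f : X ⟶ Y) (g : X' ⟶ Y'),
    (∃ (i : Arrow.mk f ⟶ Arrow.mk g) (r : Arrow.mk g ⟶ Arrow.mk f), i ≫ r = 𝟙 _) →
    S g → S f

/-- The restriction of a chain `F : γ ⥤ K` to the elements below `m`. -/
def restrictionBelow {γ : Type v} [Preorder γ] {K : Type u} [Category.{v} K]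
    (F : γ ⥤ K) (m : γ) : {i : γ // i < m} ⥤ K :=
  (Monotone.functor (f := fun i : {i : γ // i < m} => (i : γ)) fun _ _ h => h) ⋙ F

/-- The cocone over the restriction of `F` below `m` with apex `F.obj m`. -/
def coconeBelow {γ : Type v} [Preorder γ] {K : Type u} [Category.{v} K]
    (F : γ ⥤ K) (m : γ) : Cocone (restrictionBelow F m) where
  pt := F.obj m
  ι :=
    { app := fun i => F.map (homOfLE i.2.le)
      naturality := fun i j g => by
        dsimp [restrictionBelow]
        rw [Category.comp_id, ← F.map_comp]
        rfl }

/-- `S` is closed under transfinite compositions: for every well-ordered chain `F` whose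
successor steps lie in `S` and which is smooth (colimits at limit stages), the induced
morphism from the bottom object to the colimit of the chain lies in `S`. -/
def ClosedUnderTransfiniteComposition {K : Type u} [Category.{v} K]
    (S : MorphismProperty K) : Prop :=
  ∀ (γ : Type v) [LinearOrder γ] [OrderBot γ] [SuccOrder γ] [WellFoundedLT γ] (F : γ ⥤ K),
    (∀ i : γ, ¬IsMax i → S (F.map (homOfLE (le_succ i)))) →
    (∀ m : γ, IsSuccLimit m → Nonempty (IsColimit (coconeBelow F m))) →
    ∀ (c : Cocone F), IsColimit c → S (c.ι.app ⊥)

/-- `S` contains all isomorphisms, all pushouts of morphisms of `C`, and is closed under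
transfinite compositions and retracts. -/
def ClosedCofClass {K : Type u} [Category.{v} K] (C S : MorphismProperty K) : Prop :=
  (∀ ⦃X Y : K⦄ (f : X ⟶ Y), IsIso f → S f) ∧
  (∀ ⦃A B A' P : K⦄ (f : A ⟶ B) (t : A ⟶ A') (b : B ⟶ P) (g : A' ⟶ P),
      C f → IsPushout f t b g → S g) ∧
  ClosedUnderTransfiniteComposition S ∧
  StableUnderRetracts S

/-- `cof C` is the smallest class of morphisms containing the isomorphisms and closed under
transfinite compositions, pushouts of morphisms of `C`, and retracts. -/
def cof {K : Type u} [Category.{v} K] (C : MorphismProperty K) : MorphismProperty K :=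
  fun _ _ f => ∀ S : MorphismProperty K, ClosedCofClass C S → S f

/-- The class of morphisms with the right lifting property w.r.t. every morphism of `C`. -/
def rlp {K : Type u} [Category.{v} K] (C : MorphismProperty K) : MorphismProperty K :=
  fun _ _ g => ∀ ⦃A B : K⦄ (f : A ⟶ B), C f → HasLiftingProperty f g

/-- The class of morphisms with the left lifting property w.r.t. every morphism of `C`. -/
def llp {K : Type u} [Category.{v} K] (C : MorphismProperty K) : MorphismProperty K :=
  fun _ _ f => ∀ ⦃A B : K⦄ (g : A ⟶ B), C g → HasLiftingProperty f g

/-- `(L, R)` is a weak factorization system. -/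
def IsWeakFactorizationSystem {K : Type u} [Category.{v} K]
    (L R : MorphismProperty K) : Prop :=
  R = rlp L ∧ L = llp R ∧
    ∀ ⦃X Y : K⦄ (h : X ⟶ Y), ∃ (Z : K) (f : X ⟶ Z) (g : Z ⟶ Y), L f ∧ R g ∧ f ≫ g = h

/-- `f ⊥ g` : every commutative square from `f` to `g` has a unique diagonal filler. -/
def Orth {K : Type u} [Category.{v} K] {A B C D : K} (f : A ⟶ B) (g : C ⟶ D) : Prop :=
  ∀ (u : A ⟶ C) (v : B ⟶ D), u ≫ g = f ≫ v → ∃! d : B ⟶ C, f ≫ d = u ∧ d ≫ g = v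

/-- The class of morphisms orthogonal (on the right) to every morphism of `C`. -/
def perp {K : Type u} [Category.{v} K] (C : MorphismProperty K) : MorphismProperty K :=
  fun _ _ g => ∀ ⦃A B : K⦄ (f : A ⟶ B), C f → Orth f g

/-- The class of morphisms orthogonal (on the left) to every morphism of `C`. -/
def perpLeft {K : Type u} [Category.{v} K] (C : MorphismProperty K) : MorphismProperty K :=
  fun _ _ f => ∀ ⦃A B : K⦄ (g : A ⟶ B), C g → Orth f g

/-- `(L, R)` is an (orthogonal) factorization system. -/
def IsFactorizationSystem {K : Type u} [Category.{v} K]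
    (L R : MorphismProperty K) : Prop :=
  R = perp L ∧ L = perpLeft R ∧
    ∀ ⦃X Y : K⦄ (h : X ⟶ Y), ∃ (Z : K) (f : X ⟶ Z) (g : Z ⟶ Y), L f ∧ R g ∧ f ≫ g = h

/-- A class of morphisms of `K` is closed under colimits of a given small shape in the
arrow category. -/
def ClosedUnderColimitsInArrow {K : Type u} [Category.{v} K]
    (S : MorphismProperty K) : Prop :=
  ∀ (J : Type v) [SmallCategory J] (D : J ⥤ Arrow K) (c : Cocone D),
    IsColimit c → (∀ j, S (D.obj j).hom) → S c.pt.hom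

/-- `colimClosure C` is the smallest class of morphisms containing `C` and closed under all
(small) colimits in the arrow category. -/
def colimClosure {K : Type u} [Category.{v} K] (C : MorphismProperty K) :
    MorphismProperty K :=
  fun _ _ f => ∀ S : MorphismProperty K, C ≤ S → ClosedUnderColimitsInArrow S → S f

/-- `X` is injective with respect to every morphism of `C`. -/
def InjClass {K : Type u} [Category.{v} K] (C : MorphismProperty K) (X : K) : Prop :=
  ∀ ⦃A B : K⦄ (h : A ⟶ B), C h → ∀ u : A ⟶ X, ∃ v : B ⟶ X, h ≫ v = u

/-- `X` is orthogonal to every morphism of `C`. -/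
def OrtClass {K : Type u} [Category.{v} K] (C : MorphismProperty K) (X : K) : Prop :=
  ∀ ⦃A B : K⦄ (h : A ⟶ B), C h → ∀ u : A ⟶ X, ∃! v : B ⟶ X, h ≫ v = u

/-- A full subcategory `P` is weakly reflective if every object admits a weak reflection
into `P`. -/
def WeaklyReflective {K : Type u} [Category.{v} K] (P : K → Prop) : Prop :=
  ∀ X : K, ∃ (X' : K) (r : X ⟶ X'), P X' ∧
    ∀ (Y : K) (f : X ⟶ Y), P Y → ∃ g : X' ⟶ Y, r ≫ g = f

end ClassAcc
namespace ClassAcc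

section Aux

variable {K : Type u} [Category.{v} K]

/-- The functor sending `X` to the identity arrow `𝟙 X`; it is right adjoint to the
codomain functor `Arrow.rightFunc`. -/
@[simps]
def arrowIdFunctor : K ⥤ Arrow K where
  obj X := Arrow.mk (𝟙 X)
  map f := Arrow.homMk (u := f) (v := f) (by simp)

/-- The codomain functor is a left adjoint, hence preserves colimits. -/
def rightFuncAdj : (Arrow.rightFunc : Arrow K ⥤ K) ⊣ arrowIdFunctor :=
  Adjunction.mkOfHomEquiv
    { homEquiv := fun g X =>
        { toFun := fun v => Arrow.homMk (u := g.hom ≫ v) (v := v) (Category.comp_id _)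
          invFun := fun p => p.right
          left_inv := fun v => rfl
          right_inv := fun p => by
            ext
            · have := Arrow.w p
              exact this.symm.trans (Category.comp_id _)
            · rfl }
      homEquiv_naturality_left_symm := by intros; rfl
      homEquiv_naturality_right := by intros; ext; exacts [(Category.assoc _ _ _).symm, rfl] }

/-- The functor sending `X` to the arrow `X ⟶ ⊤`; it is right adjoint to the
domain functor `Arrow.leftFunc`. -/
@[simps]
noncomputable def arrowToTerminal [HasTerminal K] : K ⥤ Arrow K where
  obj X := Arrow.mk (terminal.from X)
  map f := Arrow.homMk (u := f) (v := 𝟙 _) (by dsimp; apply terminal.hom_ext)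
  map_id X := by ext <;> simp
  map_comp f g := by ext <;> simp

/-- The domain functor is a left adjoint, hence preserves colimits. -/
noncomputable def leftFuncAdj [HasTerminal K] :
    (Arrow.leftFunc : Arrow K ⥤ K) ⊣ arrowToTerminal :=
  Adjunction.mkOfHomEquiv
    { homEquiv := fun g X =>
        { toFun := fun u => Arrow.homMk (u := u) (v := terminal.from _)
            (terminal.hom_ext _ _)
          invFun := fun p => p.left
          left_inv := fun u => rfl
          right_inv := fun p => by
            ext
            · rfl
            · exact terminal.hom_ext _ _ }
      homEquiv_naturality_left_symm := by intros; rfl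
      homEquiv_naturality_right := by
        intros; ext <;> [skip; exact terminal.hom_ext _ _]; rfl }

end Aux

/-- **Corollary 4.5.** Let `K` be a class-locally presentable category and `C` a
cone-coreflective class of morphisms which are `κ`-presentable (i.e. have `κ`-presentable
domains and codomains). Then `C^□` is closed under `κ`-filtered colimits in the morphism
category `K^→`. -/
theorem rlp_closedUnderFilteredColimits (κ : Cardinal.{v}) (hκ : κ.IsRegular)
    {K : Type u} [Category.{v} K] (hK : IsClassLocallyPresentableCat K)
    (C : MorphismProperty K) (hC : ConeCoreflective C)
    (hpres : ∀ ⦃X Y : K⦄ (f : X ⟶ Y), C f → IsPresentable κ X ∧ IsPresentable κ Y) :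
    ∀ (J : Type v) [SmallCategory J], IsCardinalFiltered J κ →
      ∀ (D : J ⥤ Arrow K) (c : Cocone D), IsColimit c →
        (∀ j, rlp C (D.obj j).hom) → rlp C c.pt.hom := by
  intro J _ hJ D c hc hD A B f hf
  obtain ⟨κ₀, hκ₀, ⟨hacc, hlim, hcolim⟩⟩ := hK
  haveI : HasLimitsOfSize.{v, v} K := hlim
  haveI : HasColimitsOfSize.{v, v} K := hcolim
  haveI : HasTerminal K := inferInstance
  haveI hfil : IsFiltered J := by
    apply IsFiltered.of_cocone_nonempty.{v}
    intro Df _ _ F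
    exact hJ Df (lt_of_lt_of_le (Cardinal.mk_lt_aleph0_iff.mpr inferInstance) hκ.aleph0_le) F
  haveI : PreservesColimitsOfSize.{v, v} (Arrow.leftFunc : Arrow K ⥤ K) :=
    leftFuncAdj.leftAdjoint_preservesColimits
  haveI : PreservesColimitsOfSize.{v, v} (Arrow.rightFunc : Arrow K ⥤ K) :=
    rightFuncAdj.leftAdjoint_preservesColimits
  haveI pA : PreservesColimitsOfShape J (coyoneda.obj (op A)) := (hpres f hf).1 J hJ
  haveI pB : PreservesColimitsOfShape J (coyoneda.obj (op B)) := (hpres f hf).2 J hJ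
  have hcR : IsColimit (Arrow.rightFunc.mapCocone c) := isColimitOfPreserves _ hc
  have hAL : IsColimit ((coyoneda.obj (op A)).mapCocone (Arrow.leftFunc.mapCocone c)) :=
    isColimitOfPreserves _ (isColimitOfPreserves Arrow.leftFunc hc)
  have hAR : IsColimit ((coyoneda.obj (op A)).mapCocone (Arrow.rightFunc.mapCocone c)) :=
    isColimitOfPreserves _ hcR
  have hBR : IsColimit ((coyoneda.obj (op B)).mapCocone (Arrow.rightFunc.mapCocone c)) :=
    isColimitOfPreserves _ hcR
  constructor
  intro u v sq
  -- factor `u` and `v` through stages of the colimit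
  obtain ⟨j₁, (u₁ : A ⟶ (D.obj j₁).left), hu₁'⟩ := Types.jointly_surjective _ hAL u
  obtain ⟨j₂, (v₁ : B ⟶ (D.obj j₂).right), hv₁'⟩ := Types.jointly_surjective _ hBR v
  have hu₁ : u₁ ≫ (c.ι.app j₁).left = u := hu₁'
  have hv₁ : v₁ ≫ (c.ι.app j₂).right = v := hv₁'
  -- move to a common stage j₃
  obtain ⟨j₃, s₁, s₂, -⟩ : ∃ (j₃ : J) (_ : j₁ ⟶ j₃) (_ : j₂ ⟶ j₃), True :=
    ⟨IsFiltered.max j₁ j₂, IsFiltered.leftToMax j₁ j₂, IsFiltered.rightToMax j₁ j₂, trivial⟩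
  obtain ⟨u₂, hu₂d⟩ : ∃ x : A ⟶ (D.obj j₃).left, x = u₁ ≫ (D.map s₁).left := ⟨_, rfl⟩
  obtain ⟨v₂, hv₂d⟩ : ∃ x : B ⟶ (D.obj j₃).right, x = v₁ ≫ (D.map s₂).right := ⟨_, rfl⟩
  have hnat₁ : (D.map s₁).left ≫ (c.ι.app j₃).left = (c.ι.app j₁).left :=
    congrArg CommaMorphism.left (c.w s₁)
  have hnat₂ : (D.map s₂).right ≫ (c.ι.app j₃).right = (c.ι.app j₂).right :=
    congrArg CommaMorphism.right (c.w s₂)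
  have hu₂ : u₂ ≫ (c.ι.app j₃).left = u := by
    rw [hu₂d, Category.assoc, hnat₁, hu₁]
  have hv₂ : v₂ ≫ (c.ι.app j₃).right = v := by
    rw [hv₂d, Category.assoc, hnat₂, hv₁]
  -- the two composites A ⟶ (D.obj j₃).right agree in the colimit
  have hwι : (c.ι.app j₃).left ≫ c.pt.hom = (D.obj j₃).hom ≫ (c.ι.app j₃).right :=
    Arrow.w (c.ι.app j₃)
  have key : (u₂ ≫ (D.obj j₃).hom) ≫ (c.ι.app j₃).right = (f ≫ v₂) ≫ (c.ι.app j₃).right := by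
    rw [Category.assoc, ← hwι, ← Category.assoc, hu₂, sq.w, Category.assoc, hv₂]
  have key2 : ((coyoneda.obj (op A)).mapCocone (Arrow.rightFunc.mapCocone c)).ι.app j₃
        (u₂ ≫ (D.obj j₃).hom) =
      ((coyoneda.obj (op A)).mapCocone (Arrow.rightFunc.mapCocone c)).ι.app j₃ (f ≫ v₂) := key
  rw [Types.FilteredColimit.isColimit_eq_iff _ hAR] at key2
  obtain ⟨j₄, s, t, hst'⟩ := key2
  have hst : (u₂ ≫ (D.obj j₃).hom) ≫ (D.map s).right = (f ≫ v₂) ≫ (D.map t).right := hst'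
  -- coequalize s and t
  obtain ⟨σ, hσs, hσt⟩ : ∃ σ : j₃ ⟶ IsFiltered.coeq s t,
      σ = s ≫ IsFiltered.coeqHom s t ∧ σ = t ≫ IsFiltered.coeqHom s t :=
    ⟨_, rfl, IsFiltered.coeq_condition s t⟩
  have hcomp : ∀ {a b d : J} (g : a ⟶ b) (g' : b ⟶ d),
      (D.map (g ≫ g')).right = (D.map g).right ≫ (D.map g').right := by
    intro a b d g g'
    rw [D.map_comp]
    rfl
  have hσeq : (u₂ ≫ (D.obj j₃).hom) ≫ (D.map σ).right = (f ≫ v₂) ≫ (D.map σ).right := by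
    conv_lhs => rw [hσs]
    conv_rhs => rw [hσt]
    rw [hcomp, hcomp, ← Category.assoc, ← Category.assoc, hst]
  have hwσ : (D.map σ).left ≫ (D.obj (IsFiltered.coeq s t)).hom =
      (D.obj j₃).hom ≫ (D.map σ).right := Arrow.w (D.map σ)
  have hsq : (u₂ ≫ (D.map σ).left) ≫ (D.obj (IsFiltered.coeq s t)).hom =
      f ≫ (v₂ ≫ (D.map σ).right) := by
    rw [Category.assoc, hwσ, ← Category.assoc, ← Category.assoc]
    rw [Category.assoc u₂ (D.obj j₃).hom (D.map σ).right, ← Category.assoc u₂, hσeq,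
      Category.assoc]
  -- lift at stage j₅ and push into the colimit
  haveI := hD (IsFiltered.coeq s t) f hf
  have sq' : CommSq (u₂ ≫ (D.map σ).left) f (D.obj (IsFiltered.coeq s t)).hom
      (v₂ ≫ (D.map σ).right) := ⟨hsq⟩
  have hnatL : (D.map σ).left ≫ (c.ι.app (IsFiltered.coeq s t)).left = (c.ι.app j₃).left :=
    congrArg CommaMorphism.left (c.w σ)
  have hnatR : (D.map σ).right ≫ (c.ι.app (IsFiltered.coeq s t)).right = (c.ι.app j₃).right :=
    congrArg CommaMorphism.right (c.w σ)
  have hwι₅ : (c.ι.app (IsFiltered.coeq s t)).left ≫ c.pt.hom =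
      (D.obj (IsFiltered.coeq s t)).hom ≫ (c.ι.app (IsFiltered.coeq s t)).right :=
    Arrow.w (c.ι.app (IsFiltered.coeq s t))
  exact CommSq.HasLift.mk'
    { l := sq'.lift ≫ (c.ι.app (IsFiltered.coeq s t)).left
      fac_left := by
        rw [← Category.assoc, sq'.fac_left, Category.assoc, hnatL, hu₂]
      fac_right := by
        rw [Category.assoc, hwι₅, ← Category.assoc, sq'.fac_right, Category.assoc, hnatR, hv₂] }

end ClassAcc
end

section
/- Let 𝒦 be a class-locally λ-presentable category whose terminal object is λ-presentable, and let (ℒ, ℛ) be a cofibrantly class-λ-generated weak factorization system on 𝒦. Then Inj(ℒ), the full subcategory of objects K with (K → 1) ∈ ℛ, is a class-accessible category that is strongly accessibly embedded in 𝒦. -/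
universe w₂ w₁ w v u u₁ u₂ u₃

open CategoryTheory CategoryTheory.Limits Opposite Order

namespace ClassAcc

/-- A weak factorization system `(L, R)` is cofibrantly class-`κ`-generated if `L = cof C`
for a cone-coreflective class `C` of `κ`-presentable morphisms such that every morphism
between `κ`-presentable objects has a weak factorization with `κ`-presentable middle
object. -/
def CofibrantlyClassGenerated (κ : Cardinal.{v}) {K : Type u} [Category.{v} K]
    (L R : MorphismProperty K) : Prop :=
  ∃ C : MorphismProperty K, ConeCoreflective C ∧ L = cof C ∧
    (∀ ⦃X Y : K⦄ (f : X ⟶ Y), C f → IsPresentable κ X ∧ IsPresentable κ Y) ∧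
    (∀ ⦃X Y : K⦄ (f : X ⟶ Y), IsPresentable κ X → IsPresentable κ Y →
      ∃ (Z : K) (l : X ⟶ Z) (r : Z ⟶ Y), L l ∧ R r ∧ l ≫ r = f ∧ IsPresentable κ Z)

end ClassAcc
namespace ClassAcc


section Auxiliary

variable {K : Type u} [Category.{v} K]

/-! ### Small index gadgets -/

/-- A discrete index category. -/
def DiscIdx (ι : Type v) : Type v := ι

instance (ι : Type v) : SmallCategory (DiscIdx ι) where
  Hom a b := { _u : PUnit.{v+1} // a = b }
  id _ := ⟨⟨⟩, rfl⟩
  comp f g := ⟨⟨⟩, f.2.trans g.2⟩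
  id_comp _ := Subtype.ext (Subsingleton.elim _ _)
  comp_id _ := Subtype.ext (Subsingleton.elim _ _)
  assoc _ _ _ := Subtype.ext (Subsingleton.elim _ _)

instance (ι : Type v) (a b : DiscIdx ι) : Subsingleton (a ⟶ b) :=
  ⟨fun f g => Subtype.ext (Subsingleton.elim _ _)⟩

/-- Functor out of a discrete index category. -/
def discFunctor {ι : Type v} {T : Type u₃} [Category.{w₂} T] (j : ι → T) : DiscIdx ι ⥤ T where
  obj i := j i
  map {a b} f := eqToHom (congrArg j f.2)
  map_id _ := rfl
  map_comp {a b c} f g := by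
    obtain ⟨_, rfl⟩ := f; obtain ⟨_, rfl⟩ := g; simp

lemma mk_discIdx_lt {ι : Type v} {κ : Cardinal.{v}} (hκ : κ.IsRegular) (h : Cardinal.mk ι < κ) :
    Cardinal.mk (Σ (a : DiscIdx ι) (b : DiscIdx ι), a ⟶ b) < κ := by
  have hinj : Function.Injective
      (fun x : Σ (a : DiscIdx ι) (b : DiscIdx ι), a ⟶ b => ((x.1 : ι), (x.2.1 : ι))) := by
    rintro ⟨a, b, f⟩ ⟨a', b', f'⟩ hx
    simp only [Prod.mk.injEq] at hx
    obtain ⟨rfl, rfl⟩ : a = a' ∧ b = b' := hx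
    have : f = f' := Subsingleton.elim _ _
    subst this; rfl
  have h1 : Cardinal.mk (Σ (a : DiscIdx ι) (b : DiscIdx ι), a ⟶ b) ≤ Cardinal.mk (ι × ι) :=
    Cardinal.mk_le_of_injective hinj
  have h2 : Cardinal.mk (ι × ι) < κ := by
    have := Cardinal.mul_lt_of_lt hκ.aleph0_le h h
    rw [Cardinal.mk_prod]
    simpa using this
  exact lt_of_le_of_lt h1 h2

/-- Given a `< κ`-small family of objects in a `κ`-filtered category, there is an upper
bound. -/
lemma cardinalFiltered_sup {J : Type v} [SmallCategory J] {κ : Cardinal.{v}}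
    (hκ : κ.IsRegular) (hJ : IsCardinalFiltered J κ) {ι : Type v} (h : Cardinal.mk ι < κ)
    (j : ι → J) : ∃ (w : J), Nonempty (∀ i, j i ⟶ w) := by
  obtain ⟨cc⟩ := hJ (DiscIdx ι) (mk_discIdx_lt hκ h) (discFunctor j)
  exact ⟨cc.pt, ⟨fun i => cc.ι.app i⟩⟩

/-- The parallel-pair index category with `ι` many parallel arrows. -/
def ParIdx (ι : Type v) : Type v := ULift Bool

/-- Hom types for `ParIdx`. -/
def ParHomT (ι : Type v) : Bool → Bool → Type v
  | false, false => PUnit.{v+1}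
  | true, true => PUnit.{v+1}
  | false, true => ι
  | true, false => PEmpty.{v+1}

instance (ι : Type v) : SmallCategory (ParIdx ι) where
  Hom a b := ParHomT ι a.down b.down
  id a := match a with
    | ⟨false⟩ => (⟨⟩ : PUnit.{v+1})
    | ⟨true⟩ => (⟨⟩ : PUnit.{v+1})
  comp {a b c} f g := match a, b, c, f, g with
    | ⟨false⟩, ⟨false⟩, _, _, g => g
    | ⟨false⟩, ⟨true⟩, ⟨true⟩, f, _ => f
    | ⟨false⟩, ⟨true⟩, ⟨false⟩, _, g => g.elim
    | ⟨true⟩, ⟨false⟩, _, f, _ => f.elim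
    | ⟨true⟩, ⟨true⟩, _, _, g => g
  id_comp {a b} f := by
    match a, b, f with
    | ⟨false⟩, ⟨false⟩, f => rfl
    | ⟨false⟩, ⟨true⟩, f => rfl
    | ⟨true⟩, ⟨false⟩, f => exact f.elim
    | ⟨true⟩, ⟨true⟩, f => rfl
  comp_id {a b} f := by
    match a, b, f with
    | ⟨false⟩, ⟨false⟩, f => cases f; rfl
    | ⟨false⟩, ⟨true⟩, f => rfl
    | ⟨true⟩, ⟨false⟩, f => exact f.elim
    | ⟨true⟩, ⟨true⟩, f => cases f; rfl
  assoc {a b c d} f g h := by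
    match a, b, c, d, f, g, h with
    | ⟨false⟩, ⟨false⟩, _, _, f, g, h => rfl
    | ⟨false⟩, ⟨true⟩, ⟨false⟩, _, f, g, h => exact g.elim
    | ⟨false⟩, ⟨true⟩, ⟨true⟩, ⟨false⟩, f, g, h => exact h.elim
    | ⟨false⟩, ⟨true⟩, ⟨true⟩, ⟨true⟩, f, g, h => rfl
    | ⟨true⟩, ⟨false⟩, _, _, f, g, h => exact f.elim
    | ⟨true⟩, ⟨true⟩, ⟨false⟩, _, f, g, h => exact g.elim
    | ⟨true⟩, ⟨true⟩, ⟨true⟩, ⟨false⟩, f, g, h => exact h.elim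
    | ⟨true⟩, ⟨true⟩, ⟨true⟩, ⟨true⟩, f, g, h => rfl

lemma mk_parIdx_lt {ι : Type v} {κ : Cardinal.{v}} (hκ : κ.IsRegular) (h : Cardinal.mk ι < κ) :
    Cardinal.mk (Σ (a : ParIdx ι) (b : ParIdx ι), a ⟶ b) < κ := by
  have hinj : Function.Injective
      (fun x : Σ (a : ParIdx ι) (b : ParIdx ι), a ⟶ b =>
        match x with
        | ⟨⟨false⟩, ⟨true⟩, f⟩ => (Sum.inr f : (Bool × Bool) ⊕ ι)
        | ⟨a, b, _⟩ => Sum.inl (a.down, b.down)) := by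
    rintro ⟨⟨a⟩, ⟨b⟩, f⟩ ⟨⟨a'⟩, ⟨b'⟩, f'⟩ hx
    cases a <;> cases b <;> cases a' <;> cases b' <;>
      first
        | exact f.elim
        | exact f'.elim
        | (simp_all; try (change PUnit at f f'; cases f; cases f'; rfl); try (cases hx; rfl))
    all_goals (have := Sum.inr.inj hx; exact congrArg (fun x : ι => (⟨⟨false⟩, ⟨true⟩, x⟩ : Σ (a : ParIdx ι) (b : ParIdx ι), a ⟶ b)) this)
  have h1 : Cardinal.mk (Σ (a : ParIdx ι) (b : ParIdx ι), a ⟶ b) ≤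
      Cardinal.mk ((Bool × Bool) ⊕ ι) := Cardinal.mk_le_of_injective hinj
  have h2 : Cardinal.mk ((Bool × Bool) ⊕ ι) < κ := by
    have hb : Cardinal.lift.{v, 0} (Cardinal.mk (Bool × Bool)) < κ :=
      lt_of_lt_of_le (Cardinal.lift_lt_aleph0.mpr (Cardinal.lt_aleph0_of_finite _))
        hκ.aleph0_le
    have hi : Cardinal.lift.{0, v} (Cardinal.mk ι) < κ := by
      simpa using h
    rw [Cardinal.mk_sum]
    exact Cardinal.add_lt_of_lt hκ.aleph0_le hb hi
  exact lt_of_le_of_lt h1 h2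

/-- Functor out of the parallel-pair index category. -/
def parFunctor {ι : Type v} {T : Type u₃} [Category.{w₂} T] (s t : T) (F : ι → (s ⟶ t)) :
    ParIdx ι ⥤ T where
  obj a := bif a.down then t else s
  map {a b} f := match a, b, f with
    | ⟨false⟩, ⟨false⟩, _ => 𝟙 s
    | ⟨false⟩, ⟨true⟩, f => F f
    | ⟨true⟩, ⟨true⟩, _ => 𝟙 t
    | ⟨true⟩, ⟨false⟩, f => f.elim
  map_id a := by
    match a with
    | ⟨false⟩ => rfl
    | ⟨true⟩ => rfl
  map_comp {a b c} f g := by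
    match a, b, c, f, g with
    | ⟨false⟩, ⟨false⟩, ⟨false⟩, f, g => exact (Category.id_comp _).symm
    | ⟨false⟩, ⟨false⟩, ⟨true⟩, f, g => exact (Category.id_comp (F g)).symm
    | ⟨false⟩, ⟨true⟩, ⟨false⟩, f, g => exact g.elim
    | ⟨false⟩, ⟨true⟩, ⟨true⟩, f, g => exact (Category.comp_id (F f)).symm
    | ⟨true⟩, ⟨false⟩, _, f, g => exact f.elim
    | ⟨true⟩, ⟨true⟩, ⟨false⟩, f, g => exact g.elim
    | ⟨true⟩, ⟨true⟩, ⟨true⟩, f, g => exact (Category.id_comp _).symm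

/-- In a `κ`-filtered category one can coequalize `< κ`-many parallel morphisms. -/
lemma cardinalFiltered_coeq {J : Type v} [SmallCategory J] {κ : Cardinal.{v}}
    (hκ : κ.IsRegular) (hJ : IsCardinalFiltered J κ) {ι : Type v} (h : Cardinal.mk ι < κ)
    {s t : J} (F : ι → (s ⟶ t)) :
    ∃ (w : J) (m₀ : s ⟶ w) (m₁ : t ⟶ w), ∀ i, F i ≫ m₁ = m₀ := by
  obtain ⟨cc⟩ := hJ (ParIdx ι) (mk_parIdx_lt hκ h) (parFunctor s t F)
  refine ⟨cc.pt, cc.ι.app ⟨false⟩, cc.ι.app ⟨true⟩, fun i => ?_⟩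
  have := cc.ι.naturality (X := (⟨false⟩ : ParIdx ι)) (Y := (⟨true⟩ : ParIdx ι)) i
  exact this.trans (Category.comp_id _)

/-! ### Filteredness -/

lemma isFiltered_of_cardinalFiltered {J : Type v} [SmallCategory J] {κ : Cardinal.{v}}
    (hκ : κ.IsRegular) (hJ : IsCardinalFiltered J κ) : IsFiltered J := by
  apply IsFiltered.of_cocone_nonempty.{v}
  intro D _ _ F
  refine hJ D ?_ F
  exact lt_of_lt_of_le (Cardinal.lt_aleph0_of_finite _) hκ.aleph0_le

/-! ### Presentability extraction -/

lemma presentable_factor {κ : Cardinal.{v}} {J : Type v} [SmallCategory J]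
    (hJ : IsCardinalFiltered J κ) {Y : J ⥤ K} {y : Cocone Y} (hy : IsColimit y)
    {A : K} (hA : IsPresentable κ A) (f : A ⟶ y.pt) :
    ∃ (j : J) (g : A ⟶ Y.obj j), g ≫ y.ι.app j = f := by
  haveI := hA J hJ
  obtain ⟨j, g, hg⟩ := Types.jointly_surjective _
    (isColimitOfPreserves (coyoneda.obj (op A)) hy) f
  exact ⟨j, g, hg⟩

lemma presentable_eq_factor {κ : Cardinal.{v}} (hκ : κ.IsRegular) {J : Type v} [SmallCategory J]
    (hJ : IsCardinalFiltered J κ) {Y : J ⥤ K} {y : Cocone Y} (hy : IsColimit y)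
    {A : K} (hA : IsPresentable κ A) {j : J} (p q : A ⟶ Y.obj j)
    (h : p ≫ y.ι.app j = q ≫ y.ι.app j) :
    ∃ (k : J) (m : j ⟶ k), p ≫ Y.map m = q ≫ Y.map m := by
  haveI := hA J hJ
  haveI : IsFiltered J := isFiltered_of_cardinalFiltered hκ hJ
  have heq := (Types.FilteredColimit.isColimit_eq_iff (Y ⋙ coyoneda.obj (op A))
    (isColimitOfPreserves (coyoneda.obj (op A)) hy) (i := j) (j := j) (xi := p) (xj := q)).mp h
  obtain ⟨k, f, g, hfg⟩ := heq
  refine ⟨IsFiltered.coeq f g, f ≫ IsFiltered.coeqHom f g, ?_⟩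
  have hcoeq := IsFiltered.coeq_condition f g
  have hfg' : p ≫ Y.map f = q ≫ Y.map g := hfg
  rw [Functor.map_comp, ← Category.assoc, hfg', Category.assoc, ← Functor.map_comp,
    ← hcoeq, Functor.map_comp]


/-! ### Retracts and small colimits of presentables -/

lemma isPresentable_of_retract {κ : Cardinal.{v}} (hκ : κ.IsRegular) {X Z : K}
    (s : X ⟶ Z) (r : Z ⟶ X) (hsr : s ≫ r = 𝟙 X) (hZ : IsPresentable κ Z) :
    IsPresentable κ X := by
  intro J _ hJ
  haveI : IsFiltered J := isFiltered_of_cardinalFiltered hκ hJ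
  refine ⟨fun {Y} => ⟨fun {y} hy => ⟨Types.FilteredColimit.isColimitOf _ _ ?_ ?_⟩⟩⟩
  · intro f
    obtain ⟨j, g, hg⟩ := presentable_factor hJ hy hZ (r ≫ f)
    refine ⟨j, s ≫ g, ?_⟩
    show f = (s ≫ g) ≫ y.ι.app j
    rw [Category.assoc, hg, ← Category.assoc, hsr, Category.id_comp]
  · intro i j xi xj hx
    have hx' : xi ≫ y.ι.app i = xj ≫ y.ι.app j := hx
    set u := IsFiltered.leftToMax i j
    set v := IsFiltered.rightToMax i j
    obtain ⟨k, m, hm⟩ := presentable_eq_factor hκ hJ hy hZ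
        (r ≫ xi ≫ Y.map u) (r ≫ xj ≫ Y.map v) (by
          simp only [Category.assoc, Cocone.w]
          rw [hx'])
    refine ⟨k, u ≫ m, v ≫ m, ?_⟩
    show xi ≫ Y.map (u ≫ m) = xj ≫ Y.map (v ≫ m)
    have hm'' : r ≫ (xi ≫ Y.map u ≫ Y.map m) = r ≫ (xj ≫ Y.map v ≫ Y.map m) := by
      simpa only [Category.assoc] using hm
    calc xi ≫ Y.map (u ≫ m) = xi ≫ Y.map u ≫ Y.map m := by rw [Functor.map_comp]
      _ = (s ≫ r) ≫ (xi ≫ Y.map u ≫ Y.map m) := by rw [hsr, Category.id_comp]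
      _ = s ≫ (r ≫ (xi ≫ Y.map u ≫ Y.map m)) := Category.assoc _ _ _
      _ = s ≫ (r ≫ (xj ≫ Y.map v ≫ Y.map m)) := by rw [hm'']
      _ = (s ≫ r) ≫ (xj ≫ Y.map v ≫ Y.map m) := (Category.assoc _ _ _).symm
      _ = xj ≫ Y.map v ≫ Y.map m := by rw [hsr, Category.id_comp]
      _ = xj ≫ Y.map (v ≫ m) := by rw [Functor.map_comp]

lemma mk_obj_lt_of_mk_sigma_lt {D : Type v} [SmallCategory D] {κ : Cardinal.{v}}
    (hD : Cardinal.mk (Σ (a : D) (b : D), a ⟶ b) < κ) : Cardinal.mk D < κ := by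
  refine lt_of_le_of_lt (Cardinal.mk_le_of_injective
    (f := fun d : D => (⟨d, d, 𝟙 d⟩ : Σ (a : D) (b : D), a ⟶ b)) ?_) hD
  intro a b h
  exact congrArg Sigma.fst h

/-- A `< κ`-small colimit of `κ`-presentable objects is `κ`-presentable. -/
lemma isPresentable_colimit {κ : Cardinal.{v}} (hκ : κ.IsRegular)
    {D : Type v} [SmallCategory D] (hD : Cardinal.mk (Σ (a : D) (b : D), a ⟶ b) < κ)
    {G : D ⥤ K} (hG : ∀ d, IsPresentable κ (G.obj d)) {w : Cocone G} (hw : IsColimit w) :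
    IsPresentable κ w.pt := by
  have hobj : Cardinal.mk D < κ := mk_obj_lt_of_mk_sigma_lt hD
  intro J _ hJ
  haveI : IsFiltered J := isFiltered_of_cardinalFiltered hκ hJ
  refine ⟨fun {Y} => ⟨fun {y} hy => ⟨Types.FilteredColimit.isColimitOf _ _ ?_ ?_⟩⟩⟩
  · intro f
    -- Step 1: factor each leg through some stage.
    choose jf gf hgf using fun d : D => presentable_factor hJ hy (hG d) (w.ι.app d ≫ f)
    -- Step 2: common stage for all objects.
    obtain ⟨t₁, ⟨m⟩⟩ := cardinalFiltered_sup hκ hJ hobj jf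
    -- Step 3: equalize the naturality defects.
    have heq : ∀ δ : Σ (a : D) (b : D), a ⟶ b,
        (G.map δ.2.2 ≫ gf δ.2.1 ≫ Y.map (m δ.2.1)) ≫ y.ι.app t₁ =
          (gf δ.1 ≫ Y.map (m δ.1)) ≫ y.ι.app t₁ := by
      rintro ⟨a, b, α⟩
      simp only [Category.assoc, Cocone.w]
      rw [hgf, hgf]
      simp only [Cocone.w_assoc]
    choose kδ eδ heδ using fun δ : Σ (a : D) (b : D), a ⟶ b =>
      presentable_eq_factor hκ hJ hy (hG δ.1)
        (G.map δ.2.2 ≫ gf δ.2.1 ≫ Y.map (m δ.2.1)) (gf δ.1 ≫ Y.map (m δ.1)) (heq δ)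
    -- Step 4: common stage for the equalizing stages, then coequalize.
    obtain ⟨t₂, ⟨q⟩⟩ := cardinalFiltered_sup hκ hJ hD kδ
    obtain ⟨t₃, m₀, m₁, hcoeq⟩ := cardinalFiltered_coeq hκ hJ hD
      (fun δ : Σ (a : D) (b : D), a ⟶ b => eδ δ ≫ q δ)
    -- Step 5: build a cocone over `G` with vertex `Y.obj t₃`.
    have hnat : ∀ ⦃a b : D⦄ (α : a ⟶ b),
        G.map α ≫ (gf b ≫ Y.map (m b) ≫ Y.map m₀) = gf a ≫ Y.map (m a) ≫ Y.map m₀ := by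
      intro a b α
      have h1 := heδ ⟨a, b, α⟩
      have h2 := hcoeq ⟨a, b, α⟩
      calc G.map α ≫ gf b ≫ Y.map (m b) ≫ Y.map m₀
          = (G.map α ≫ gf b ≫ Y.map (m b)) ≫ Y.map m₀ := by simp only [Category.assoc]
        _ = (G.map α ≫ gf b ≫ Y.map (m b)) ≫ Y.map (eδ ⟨a, b, α⟩ ≫ q ⟨a, b, α⟩ ≫ m₁) := by
              rw [← Category.assoc (eδ _) (q _) m₁, h2]
        _ = ((G.map α ≫ gf b ≫ Y.map (m b)) ≫ Y.map (eδ ⟨a, b, α⟩)) ≫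
              Y.map (q ⟨a, b, α⟩ ≫ m₁) := by
              simp only [Functor.map_comp, Category.assoc]
        _ = ((gf a ≫ Y.map (m a)) ≫ Y.map (eδ ⟨a, b, α⟩)) ≫ Y.map (q ⟨a, b, α⟩ ≫ m₁) := by
              rw [h1]
        _ = (gf a ≫ Y.map (m a)) ≫ Y.map (eδ ⟨a, b, α⟩ ≫ q ⟨a, b, α⟩ ≫ m₁) := by
              simp only [Functor.map_comp, Category.assoc]
        _ = (gf a ≫ Y.map (m a)) ≫ Y.map m₀ := by
              rw [← Category.assoc (eδ _) (q _) m₁, h2]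
        _ = gf a ≫ Y.map (m a) ≫ Y.map m₀ := by simp only [Category.assoc]
    let s₃ : Cocone G := ⟨Y.obj t₃,
      ⟨fun d => gf d ≫ Y.map (m d) ≫ Y.map m₀, fun {a b} α => by
        simpa using hnat α⟩⟩
    refine ⟨t₃, hw.desc s₃, ?_⟩
    show f = hw.desc s₃ ≫ y.ι.app t₃
    refine hw.hom_ext fun d => ?_
    rw [← Category.assoc, hw.fac]
    show w.ι.app d ≫ f = (gf d ≫ Y.map (m d) ≫ Y.map m₀) ≫ y.ι.app t₃
    simp only [Category.assoc, Cocone.w]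
    rw [hgf]
  · intro i j xi xj hx
    have hx' : xi ≫ y.ι.app i = xj ≫ y.ι.app j := hx
    set u := IsFiltered.leftToMax i j
    set v := IsFiltered.rightToMax i j
    have heq : ∀ d : D,
        (w.ι.app d ≫ xi ≫ Y.map u) ≫ y.ι.app (IsFiltered.max i j) =
          (w.ι.app d ≫ xj ≫ Y.map v) ≫ y.ι.app (IsFiltered.max i j) := by
      intro d
      simp only [Category.assoc, Cocone.w]
      rw [hx']
    choose kd ed hed using fun d : D => presentable_eq_factor hκ hJ hy (hG d)
      (w.ι.app d ≫ xi ≫ Y.map u) (w.ι.app d ≫ xj ≫ Y.map v) (heq d)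
    obtain ⟨t₂, ⟨q⟩⟩ := cardinalFiltered_sup hκ hJ hobj kd
    obtain ⟨t₃, m₀, m₁, hcoeq⟩ := cardinalFiltered_coeq hκ hJ hobj
      (fun d : D => ed d ≫ q d)
    have key : xi ≫ Y.map (u ≫ m₀) = xj ≫ Y.map (v ≫ m₀) := by
      refine hw.hom_ext fun d => ?_
      have h1 := hed d
      have h2 := hcoeq d
      calc w.ι.app d ≫ xi ≫ Y.map (u ≫ m₀)
          = (w.ι.app d ≫ xi ≫ Y.map u) ≫ Y.map m₀ := by
            simp only [Functor.map_comp, Category.assoc]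
        _ = (w.ι.app d ≫ xi ≫ Y.map u) ≫ Y.map (ed d ≫ q d ≫ m₁) := by
            rw [← Category.assoc (ed d) (q d) m₁, h2]
        _ = ((w.ι.app d ≫ xi ≫ Y.map u) ≫ Y.map (ed d)) ≫ Y.map (q d ≫ m₁) := by
            simp only [Functor.map_comp, Category.assoc]
        _ = ((w.ι.app d ≫ xj ≫ Y.map v) ≫ Y.map (ed d)) ≫ Y.map (q d ≫ m₁) := by rw [h1]
        _ = (w.ι.app d ≫ xj ≫ Y.map v) ≫ Y.map (ed d ≫ q d ≫ m₁) := by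
            simp only [Functor.map_comp, Category.assoc]
        _ = (w.ι.app d ≫ xj ≫ Y.map v) ≫ Y.map m₀ := by
            rw [← Category.assoc (ed d) (q d) m₁, h2]
        _ = w.ι.app d ≫ xj ≫ Y.map (v ≫ m₀) := by
            simp only [Functor.map_comp, Category.assoc]
    exact ⟨t₃, u ≫ m₀, v ≫ m₀, key⟩


/-! ### Lifting properties: pushouts, retracts, transfinite compositions -/

lemma hasLiftingProperty_of_isPushout {A B A' P X Y : K} {f : A ⟶ B} {t : A ⟶ A'}
    {b : B ⟶ P} {g : A' ⟶ P} (hpo : IsPushout f t b g) {p : X ⟶ Y}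
    (hf : HasLiftingProperty f p) : HasLiftingProperty g p := by
  constructor
  intro u w sq
  have sq' : CommSq (t ≫ u) f p (b ≫ w) := ⟨by
    rw [Category.assoc, sq.w, ← Category.assoc, ← Category.assoc, hpo.w]⟩
  obtain ⟨⟨l⟩⟩ := hf.sq_hasLift sq'
  have hl1 : f ≫ l.l = t ≫ u := l.fac_left
  have hl2 : l.l ≫ p = b ≫ w := l.fac_right
  refine CommSq.HasLift.mk' ⟨hpo.desc l.l u hl1, hpo.inr_desc _ _ _, ?_⟩
  refine hpo.hom_ext ?_ ?_
  · rw [← Category.assoc, hpo.inl_desc, hl2]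
  · rw [← Category.assoc, hpo.inr_desc, sq.w]

lemma hasLiftingProperty_of_retract {A B A' B' X Y : K} {f : A ⟶ B} {g : A' ⟶ B'}
    (i : Arrow.mk f ⟶ Arrow.mk g) (r : Arrow.mk g ⟶ Arrow.mk f) (hir : i ≫ r = 𝟙 _)
    {p : X ⟶ Y} (hg : HasLiftingProperty g p) : HasLiftingProperty f p := by
  constructor
  intro u w sq
  have hil : i.left ≫ r.left = 𝟙 A := by
    have := congrArg CommaMorphism.left hir; simpa using this
  have hirr : i.right ≫ r.right = 𝟙 B := by
    have := congrArg CommaMorphism.right hir; simpa using this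
  have hi : i.left ≫ g = f ≫ i.right := Arrow.w i
  have hr : r.left ≫ f = g ≫ r.right := Arrow.w r
  have sq' : CommSq (r.left ≫ u) g p (r.right ≫ w) := ⟨by
    rw [Category.assoc, sq.w, ← Category.assoc, hr, Category.assoc]⟩
  obtain ⟨⟨l⟩⟩ := hg.sq_hasLift sq'
  refine CommSq.HasLift.mk' ⟨i.right ≫ l.l, ?_, ?_⟩
  · rw [← Category.assoc, ← hi, Category.assoc, l.fac_left, ← Category.assoc, hil,
      Category.id_comp]
  · rw [Category.assoc, l.fac_right, ← Category.assoc, hirr, Category.id_comp]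

lemma closedUnderTransfiniteComposition_lifting {X Y : K} (p : X ⟶ Y) :
    ClosedUnderTransfiniteComposition
      (fun (_ _ : K) (f : _ ⟶ _) => HasLiftingProperty f p) := by
  intro γ _ _ _ _ F hsucc hlim c hc
  constructor
  intro u v sq
  classical
  -- the set of coherent partial lifts
  set 𝒮 : Set (Set (Σ i : γ, F.obj i ⟶ X)) :=
    {S | (∀ (i : γ) (d d' : F.obj i ⟶ X), ⟨i, d⟩ ∈ S → ⟨i, d'⟩ ∈ S → d = d') ∧
      (∀ (i j : γ) (hij : i ≤ j) (d : F.obj j ⟶ X), ⟨j, d⟩ ∈ S →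
        (⟨i, F.map (homOfLE hij) ≫ d⟩ : Σ i : γ, F.obj i ⟶ X) ∈ S) ∧
      (∀ d : F.obj ⊥ ⟶ X, ⟨⊥, d⟩ ∈ S → d = u) ∧
      (∀ (i : γ) (d : F.obj i ⟶ X), ⟨i, d⟩ ∈ S → d ≫ p = c.ι.app i ≫ v)} with h𝒮
  have hchain : ∀ ch ⊆ 𝒮, IsChain (· ⊆ ·) ch → ch.Nonempty →
      ∃ ub ∈ 𝒮, ∀ s ∈ ch, s ⊆ ub := by
    intro ch hch hchain _
    refine ⟨⋃₀ ch, ⟨?_, ?_, ?_, ?_⟩, fun s hs => Set.subset_sUnion_of_mem hs⟩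
    · rintro i d d' ⟨S₁, hS₁, hd⟩ ⟨S₂, hS₂, hd'⟩
      rcases hchain.total hS₁ hS₂ with h | h
      · exact (hch hS₂).1 i d d' (h hd) hd'
      · exact (hch hS₁).1 i d d' hd (h hd')
    · rintro i j hij d ⟨S₁, hS₁, hd⟩
      exact ⟨S₁, hS₁, (hch hS₁).2.1 i j hij d hd⟩
    · rintro d ⟨S₁, hS₁, hd⟩
      exact (hch hS₁).2.2.1 d hd
    · rintro i d ⟨S₁, hS₁, hd⟩
      exact (hch hS₁).2.2.2 i d hd
  have hempty : (∅ : Set (Σ i : γ, F.obj i ⟶ X)) ∈ 𝒮 := by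
    refine ⟨?_, ?_, ?_, ?_⟩ <;> intros <;> simp_all
  obtain ⟨M, -, hmax⟩ := zorn_subset_nonempty 𝒮 hchain ∅ hempty
  have hM : M ∈ 𝒮 := hmax.prop
  obtain ⟨hfunc, hdown, hbot, hcg⟩ := hM
  -- totality by well-founded induction
  have total : ∀ i : γ, ∃ d : F.obj i ⟶ X, (⟨i, d⟩ : Σ i : γ, F.obj i ⟶ X) ∈ M := by
    intro i
    induction i using WellFoundedLT.induction with
    | ind i IH =>
      by_cases hidom : ∃ d : F.obj i ⟶ X, (⟨i, d⟩ : Σ i : γ, F.obj i ⟶ X) ∈ M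
      · exact hidom
      -- construct a candidate value at `i`
      have hd₀ : ∃ d₀ : F.obj i ⟶ X,
          (d₀ ≫ p = c.ι.app i ≫ v) ∧
          (∀ (j : γ) (hj : j < i) (d : F.obj j ⟶ X),
            (⟨j, d⟩ : Σ i : γ, F.obj i ⟶ X) ∈ M → F.map (homOfLE hj.le) ≫ d₀ = d) ∧
          (∀ (_ : i = ⊥), F.map (homOfLE bot_le) ≫ d₀ = u) := by
        by_cases hbotcase : i = ⊥
        · subst hbotcase
          refine ⟨u, sq.w, fun j hj => absurd hj not_lt_bot, fun _ => ?_⟩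
          rw [show (homOfLE (bot_le : (⊥ : γ) ≤ ⊥)) = 𝟙 (⊥ : γ) from rfl, F.map_id,
            Category.id_comp]
        · by_cases hsucccase : ∃ j : γ, j ⋖ i
          · obtain ⟨j, hcov⟩ := hsucccase
            obtain ⟨dj, hdj⟩ := IH j hcov.lt
            have hi : i = succ j := hcov.succ_eq.symm
            subst hi
            have hjmax : ¬IsMax j := not_isMax_of_lt hcov.lt
            haveI := hsucc j hjmax
            have sq' : CommSq dj (F.map (homOfLE (le_succ j))) p (c.ι.app (succ j) ≫ v) := ⟨by
              rw [hcg j dj hdj, ← Category.assoc, Cocone.w]⟩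
            obtain ⟨⟨l⟩⟩ := (hsucc j hjmax).sq_hasLift sq'
            refine ⟨l.l, l.fac_right, ?_, fun h => absurd h hbotcase⟩
            intro j' hj' d hd
            have hj'j : j' ≤ j := (lt_succ_iff_of_not_isMax hjmax).mp hj'
            have : F.map (homOfLE hj'.le) ≫ l.l =
                F.map (homOfLE hj'j) ≫ F.map (homOfLE (le_succ j)) ≫ l.l := by
              rw [← Category.assoc, ← Functor.map_comp, homOfLE_comp]
            rw [this, l.fac_left]
            have hmem := hdown j' j hj'j dj hdj
            exact hfunc j' _ d hmem hd
          · -- limit case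
            have hlimi : IsSuccLimit i := by
              constructor
              · intro hmin
                exact hbotcase (le_antisymm (hmin bot_le) bot_le)
              · intro j hcov
                exact hsucccase ⟨j, hcov⟩
            obtain ⟨hcolim⟩ := hlim i hlimi
            have sel : ∀ j : {j : γ // j < i}, ∃ d : F.obj j.1 ⟶ X,
                (⟨j.1, d⟩ : Σ i : γ, F.obj i ⟶ X) ∈ M := fun j => IH j.1 j.2
            choose tt htt using sel
            have natt : ∀ (j j' : {j : γ // j < i}) (hjj' : j.1 ≤ j'.1),
                F.map (homOfLE hjj') ≫ tt j' = tt j := by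
              intro j j' hjj'
              exact hfunc j.1 _ (tt j) (hdown j.1 j'.1 hjj' (tt j') (htt j')) (htt j)
            set scone : Cocone (restrictionBelow F i) :=
              ⟨X, ⟨fun j => tt j, by
                intro j j' gmap
                have := natt j j' (leOfHom gmap)
                exact this.trans (Category.comp_id _).symm⟩⟩ with hscone
            refine ⟨hcolim.desc scone, ?_, ?_, fun h => absurd h hbotcase⟩
            · refine hcolim.hom_ext fun j => ?_
              have hfac' : F.map (homOfLE j.2.le) ≫ hcolim.desc scone = tt j :=
                hcolim.fac scone j
              refine (Category.assoc _ _ _).symm.trans ((congrArg (· ≫ p) hfac').trans ?_)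
              show tt j ≫ p = F.map (homOfLE j.2.le) ≫ c.ι.app i ≫ v
              rw [hcg j.1 (tt j) (htt j), ← Category.assoc,
                Cocone.w]
            · intro j hj d hd
              have hfac : F.map (homOfLE hj.le) ≫ hcolim.desc scone = tt ⟨j, hj⟩ :=
                hcolim.fac scone ⟨j, hj⟩
              rw [hfac]
              exact hfunc j _ d (htt ⟨j, hj⟩) hd
      obtain ⟨d₀, hd₀p, hd₀ext, hd₀bot⟩ := hd₀
      -- extend `M`
      set N : Set (Σ i : γ, F.obj i ⟶ X) :=
        {x | ∃ h : x.1 ≤ i, x.2 = F.map (homOfLE h) ≫ d₀} with hN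
      have hMN : M ∪ N ∈ 𝒮 := by
        have hMval : ∀ (j : γ) (hj : j ≤ i) (d : F.obj j ⟶ X),
            (⟨j, d⟩ : Σ i : γ, F.obj i ⟶ X) ∈ M → F.map (homOfLE hj) ≫ d₀ = d := by
          intro j hj d hd
          rcases lt_or_eq_of_le hj with h | h
          · exact hd₀ext j h d hd
          · subst h
            exact absurd ⟨d, hd⟩ hidom
        refine ⟨?_, ?_, ?_, ?_⟩
        · rintro j d d' (hd | ⟨hj, hd⟩) (hd' | ⟨hj', hd'⟩)
          · exact hfunc j d d' hd hd'
          · dsimp at hd'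
            rw [hd', hMval j hj' d hd]
          · dsimp at hd
            rw [hd, hMval j hj d' hd']
          · dsimp at hd hd'
            rw [hd, hd']
        · rintro j j' hjj' d (hd | ⟨hj, hd⟩)
          · exact Or.inl (hdown j j' hjj' d hd)
          · refine Or.inr ⟨hjj'.trans hj, ?_⟩
            dsimp at hd ⊢
            rw [hd, ← Category.assoc, ← Functor.map_comp, homOfLE_comp]
        · rintro d (hd | ⟨hb, hd⟩)
          · exact hbot d hd
          · dsimp at hd
            rcases lt_or_eq_of_le hb with h | h
            · obtain ⟨db, hdb⟩ := IH ⊥ h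
              rw [hd, hd₀ext ⊥ h db hdb, hbot db hdb]
            · exact hd.trans (hd₀bot h.symm)
        · rintro j d (hd | ⟨hj, hd⟩)
          · exact hcg j d hd
          · dsimp at hd
            rw [hd, Category.assoc, hd₀p, ← Category.assoc, Cocone.w]
      have : M ∪ N ⊆ M := hmax.2 hMN Set.subset_union_left
      refine ⟨F.map (homOfLE (le_refl i)) ≫ d₀, this (Or.inr ⟨le_refl i, rfl⟩)⟩
  choose t ht using total
  have hnat : ∀ (i j : γ) (g : i ⟶ j), F.map g ≫ t j = t i := by
    intro i j g
    have : F.map g = F.map (homOfLE (leOfHom g)) := rfl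
    rw [this]
    exact hfunc i _ (t i) (hdown i j (leOfHom g) (t j) (ht j)) (ht i)
  set scone : Cocone F := ⟨X, ⟨fun i => t i, by
    intro i j g
    have := hnat i j g
    simpa using this⟩⟩ with hscone
  refine CommSq.HasLift.mk' ⟨hc.desc scone, ?_, ?_⟩
  · rw [hc.fac scone ⊥]
    show t ⊥ = u
    exact hbot (t ⊥) (ht ⊥)
  · refine hc.hom_ext fun i => ?_
    rw [← Category.assoc, hc.fac scone i]
    show t i ≫ p = c.ι.app i ≫ v
    exact hcg i (t i) (ht i)

/-- The class of maps with the left lifting property against a fixed morphism is a closed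
cof-class. -/
lemma closedCofClass_lifting (C : MorphismProperty K) {X Y : K} (p : X ⟶ Y)
    (hbase : ∀ ⦃A B : K⦄ (f : A ⟶ B), C f → HasLiftingProperty f p) :
    ClosedCofClass C (fun (_ _ : K) (f : _ ⟶ _) => HasLiftingProperty f p) := by
  refine ⟨?_, ?_, closedUnderTransfiniteComposition_lifting p, ?_⟩
  · intro A B f hf
    haveI : IsIso f := hf
    infer_instance
  · intro A B A' P f t b g hf hpo
    exact hasLiftingProperty_of_isPushout hpo (hbase f hf)
  · rintro A B A' B' f g ⟨i, r, hir⟩ hg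
    exact hasLiftingProperty_of_retract i r hir hg

lemma cof_hasLiftingProperty {C : MorphismProperty K} {X Y : K} {p : X ⟶ Y}
    (hbase : ∀ ⦃A B : K⦄ (f : A ⟶ B), C f → HasLiftingProperty f p)
    {A B : K} {f : A ⟶ B} (hf : cof C f) : HasLiftingProperty f p :=
  hf _ (closedCofClass_lifting C p hbase)

lemma le_cof (C : MorphismProperty K) {A B : K} {f : A ⟶ B} (hf : C f) : cof C f :=
  fun _ hS => hS.2.1 f (𝟙 _) (𝟙 _) f hf (IsPushout.of_id_snd)


/-! ### Closure of the injectivity class under filtered colimits -/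

lemma terminal_lifting [HasTerminal K] {κ : Cardinal.{v}}
    {C L R : MorphismProperty K}
    (hRrlp : R = rlp L) (hLC : L = cof C)
    (hCpres : ∀ ⦃X Y : K⦄ (f : X ⟶ Y), C f → IsPresentable κ X ∧ IsPresentable κ Y)
    {J : Type v} [SmallCategory J] (hJ : IsCardinalFiltered J κ)
    {D : J ⥤ K} {c : Cocone D} (hc : IsColimit c)
    (hD : ∀ j, R (terminal.from (D.obj j))) : R (terminal.from c.pt) := by
  rw [hRrlp]
  intro A B f hfL
  rw [hLC] at hfL
  refine cof_hasLiftingProperty ?_ hfL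
  intro A' B' f' hf'
  constructor
  intro u' w' sq
  obtain ⟨j, u'', hu⟩ := presentable_factor hJ hc (hCpres f' hf').1 u'
  have hlift : HasLiftingProperty f' (terminal.from (D.obj j)) := by
    have hD' := hD j
    rw [hRrlp] at hD'
    refine hD' f' ?_
    rw [hLC]
    exact le_cof C hf'
  have sq2 : CommSq u'' f' (terminal.from (D.obj j)) (terminal.from B') :=
    ⟨Subsingleton.elim _ _⟩
  obtain ⟨⟨lf⟩⟩ := hlift.sq_hasLift sq2
  refine CommSq.HasLift.mk' ⟨lf.l ≫ c.ι.app j, ?_, Subsingleton.elim _ _⟩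
  rw [← Category.assoc, lf.fac_left, hu]

/-! ### Full subcategory colimits -/

variable {P : K → Prop}

/-- Lift a cocone whose vertex satisfies `P` to the full subcategory. -/
def liftCocone {J : Type v} [SmallCategory J] {D : J ⥤ ObjectProperty.FullSubcategory P}
    (c : Cocone (D ⋙ ObjectProperty.ι P)) (hpt : P c.pt) : Cocone D where
  pt := ⟨c.pt, hpt⟩
  ι := { app := fun j => ObjectProperty.homMk (c.ι.app j),
         naturality := fun {i j} f => InducedCategory.hom_ext (c.ι.naturality f) }

/-- The lifted cocone is a colimit in the full subcategory. -/
def liftCocone_isColimit {J : Type v} [SmallCategory J] {D : J ⥤ ObjectProperty.FullSubcategory P}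
    {c : Cocone (D ⋙ ObjectProperty.ι P)} (hpt : P c.pt) (hc : IsColimit c) :
    IsColimit (liftCocone c hpt) where
  desc s := ObjectProperty.homMk (hc.desc ((ObjectProperty.ι P).mapCocone s))
  fac s j := InducedCategory.hom_ext (hc.fac ((ObjectProperty.ι P).mapCocone s) j)
  uniq s m hm := InducedCategory.hom_ext (hc.uniq ((ObjectProperty.ι P).mapCocone s) m.hom
    (fun j => congrArg InducedCategory.Hom.hom (hm j)))

/-- Colimit cocones in the full subcategory map to colimit cocones in `K`, provided `P` is
suitably closed. -/
noncomputable def mapCocone_isColimit_of_closed {J : Type v} [SmallCategory J]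
    (hclosed : ∀ (D' : J ⥤ K) (c' : Cocone D'), IsColimit c' → (∀ j, P (D'.obj j)) → P c'.pt)
    [HasColimitsOfShape J K]
    {D : J ⥤ ObjectProperty.FullSubcategory P} {c : Cocone D} (hc : IsColimit c) :
    IsColimit ((ObjectProperty.ι P).mapCocone c) := by
  let c₀ := colimit.cocone (D ⋙ ObjectProperty.ι P)
  have hc₀ : IsColimit c₀ := colimit.isColimit _
  have hpt : P c₀.pt := hclosed _ c₀ hc₀ (fun j => (D.obj j).2)
  have hlift := liftCocone_isColimit hpt hc₀
  have hmap : IsColimit ((ObjectProperty.ι P).mapCocone (liftCocone c₀ hpt)) := by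
    refine IsColimit.ofIsoColimit hc₀ (Cocones.ext (Iso.refl _) fun j => ?_)
    simp [liftCocone]
  exact IsColimit.ofIsoColimit hmap
    ((Cocones.functoriality D (ObjectProperty.ι P)).mapIso
      (hlift.uniqueUpToIso hc))

/-- If `Z` is `κ`-presentable in `K` and lies in `P`, it is `κ`-presentable in the full
subcategory. -/
lemma isPresentable_fullSubcategory {κ : Cardinal.{v}}
    (hK : HasColimitsOfSize.{v, v} K)
    (hclosed : ClosedUnderCardinalFilteredColimits κ P)
    {Z : K} (hZP : P Z) (hZ : IsPresentable κ Z) :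
    IsPresentable κ (⟨Z, hZP⟩ : ObjectProperty.FullSubcategory P) := by
  intro J _ hJ
  haveI := hK
  haveI : HasColimitsOfShape J K := inferInstance
  haveI : PreservesColimitsOfShape J (ObjectProperty.ι P) :=
    ⟨fun {D} => ⟨fun {c} hc =>
      ⟨mapCocone_isColimit_of_closed (fun D' c' h hP => hclosed J hJ D' c' h hP) hc⟩⟩⟩
  haveI := hZ J hJ
  haveI : PreservesColimitsOfShape J (ObjectProperty.ι P ⋙ coyoneda.obj (op Z)) :=
    inferInstance
  exact preservesColimitsOfShape_of_natIso
    (F := ObjectProperty.ι P ⋙ coyoneda.obj (op Z))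
    (NatIso.ofComponents (fun Y => Equiv.toIso
      { toFun := fun f => ObjectProperty.homMk f, invFun := fun f => f.hom,
        left_inv := fun _ => rfl, right_inv := fun _ => rfl }) (by
      intro X' Y' f
      exact rfl))


/-! ### The approximating diagram -/

/-- Index type for the approximating diagram: pairs tracked by an index, with category
structure given by morphisms over a fixed object. -/
structure ApproxIdx {K : Type u} [Category.{v} K] {ι : Type v} (Z : ι → K) {Xo : K}
    (g : ∀ i, Z i ⟶ Xo) : Type v where
  idx : ι

instance {ι : Type v} (Z : ι → K) {Xo : K} (g : ∀ i, Z i ⟶ Xo) :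
    SmallCategory (ApproxIdx Z g) where
  Hom a b := { h : Z a.idx ⟶ Z b.idx // h ≫ g b.idx = g a.idx }
  id a := ⟨𝟙 _, Category.id_comp _⟩
  comp f h := ⟨f.1 ≫ h.1, by rw [Category.assoc, h.2, f.2]⟩
  id_comp f := Subtype.ext (Category.id_comp _)
  comp_id f := Subtype.ext (Category.comp_id _)
  assoc f h k := Subtype.ext (Category.assoc _ _ _)

/-- The approximating diagram. -/
abbrev approxDiagram {ι : Type v} (Z : ι → K) {Xo : K} (g : ∀ i, Z i ⟶ Xo) :
    ApproxIdx Z g ⥤ K where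
  obj a := Z a.idx
  map h := h.1
  map_id _ := rfl
  map_comp _ _ := rfl

/-- The canonical cocone on the approximating diagram. -/
def approxCocone {ι : Type v} (Z : ι → K) {Xo : K} (g : ∀ i, Z i ⟶ Xo) :
    Cocone (approxDiagram Z g) where
  pt := Xo
  ι := { app := fun a => g a.idx,
         naturality := fun {a b} h => by
           have := h.2
           simp only [approxDiagram, Functor.const_obj_obj, Functor.const_obj_map,
             Category.comp_id]
           exact this }

/-- **Key construction**: every object of the injectivity class is a `κ`-filtered colimit
of `κ`-presentable objects of the injectivity class. -/
lemma exists_presentable_diagram [HasTerminal K] (κ : Cardinal.{v}) (hκ : κ.IsRegular)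
    (hK : ClassLocallyPresentable κ K) (hterm : IsPresentable κ (⊤_ K))
    {L R : MorphismProperty K} (hwfs : IsWeakFactorizationSystem L R)
    (hgen : CofibrantlyClassGenerated κ L R)
    (Xo : K) (hPX : R (terminal.from Xo)) :
    ∃ (E : Type v) (_ : SmallCategory E) (Zd : E ⥤ K) (cc : Cocone Zd),
      IsCardinalFiltered E κ ∧ Nonempty (IsColimit cc) ∧ cc.pt = Xo ∧
        (∀ e, IsPresentable κ (Zd.obj e) ∧ R (terminal.from (Zd.obj e))) := by
  obtain ⟨J₀, A, c, hfilt, ⟨hc⟩, rfl, hApres⟩ := hK.1.2 Xo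
  have hRrlp : R = rlp L := hwfs.1
  obtain ⟨C, hcc, hLC, hCpres, hfact⟩ := hgen
  haveI : HasColimitsOfSize.{v, v} K := hK.2.2
  -- weak reflections into the injectivity class
  have hrefl : ∀ j : J₀, ∃ (Y : K) (l : A.obj j ⟶ Y),
      L l ∧ R (terminal.from Y) ∧ IsPresentable κ Y := by
    intro j
    obtain ⟨Y, l, r, hl, hr, _, hY⟩ := hfact (terminal.from (A.obj j)) (hApres j) hterm
    refine ⟨Y, l, hl, ?_, hY⟩
    have : terminal.from Y = r := Subsingleton.elim _ _
    rw [this]; exact hr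
  choose Z l hlL hZR hZpres using hrefl
  -- lifts to the colimit
  have hgex : ∀ j : J₀, ∃ gj : Z j ⟶ c.pt, l j ≫ gj = c.ι.app j := by
    intro j
    have hlift : HasLiftingProperty (l j) (terminal.from c.pt) := by
      have hx := hPX
      rw [hRrlp] at hx
      exact hx (l j) (hlL j)
    have sq : CommSq (c.ι.app j) (l j) (terminal.from c.pt) (terminal.from (Z j)) :=
      ⟨Subsingleton.elim _ _⟩
    obtain ⟨⟨lf⟩⟩ := hlift.sq_hasLift sq
    exact ⟨lf.l, lf.fac_left⟩
  choose g hg using hgex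
  -- the approximating category is `κ`-filtered
  have hfiltE : IsCardinalFiltered (ApproxIdx Z g) κ := by
    intro D _ hD F
    haveI : HasColimitsOfShape D K := inferInstance
    set wcone : Cocone (F ⋙ approxDiagram Z g) := (approxCocone Z g).whisker F with hwcone
    have hWpres : IsPresentable κ (colimit (F ⋙ approxDiagram Z g)) :=
      isPresentable_colimit hκ hD (fun d => hZpres (F.obj d).idx) (colimit.isColimit _)
    obtain ⟨j, wA, hwA⟩ := presentable_factor hfilt hc hWpres (colimit.desc _ wcone)
    refine ⟨⟨ApproxIdx.mk j, ⟨fun d => ⟨colimit.ι (F ⋙ approxDiagram Z g) d ≫ wA ≫ l j, ?_⟩,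
      fun {d d'} δ => Subtype.ext ?_⟩⟩⟩
    · show (colimit.ι (F ⋙ approxDiagram Z g) d ≫ wA ≫ l j) ≫ g j = g (F.obj d).idx
      simp only [Category.assoc]
      rw [hg j, hwA]
      exact colimit.ι_desc wcone d
    · have hw : (F.map δ).1 ≫ colimit.ι (F ⋙ approxDiagram Z g) d' =
          colimit.ι (F ⋙ approxDiagram Z g) d := colimit.w (F ⋙ approxDiagram Z g) δ
      show (F.map δ).1 ≫ colimit.ι (F ⋙ approxDiagram Z g) d' ≫ wA ≫ l j =
        (colimit.ι (F ⋙ approxDiagram Z g) d ≫ wA ≫ l j) ≫ 𝟙 _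
      rw [Category.comp_id]
      exact (Category.assoc _ _ _).symm.trans (congrArg (· ≫ wA ≫ l j) hw)
  -- coequalization towards the diagram
  have hcoeqE : ∀ (S : K), IsPresentable κ S → ∀ (m : ApproxIdx Z g) (α β : S ⟶ Z m.idx),
      α ≫ g m.idx = β ≫ g m.idx →
      ∃ (m' : J₀) (w : Z m.idx ⟶ Z m'), (w ≫ g m' = g m.idx) ∧ α ≫ w = β ≫ w := by
    intro S hS m α β hαβ
    haveI : HasColimitsOfShape (ParIdx (ULift.{v} Bool)) K := inferInstance
    set pf : ParIdx (ULift.{v} Bool) ⥤ K :=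
      parFunctor S (Z m.idx) (fun b => bif b.down then α else β) with hpf
    have hQpres : IsPresentable κ (colimit pf) := by
      refine isPresentable_colimit hκ
        (mk_parIdx_lt hκ (lt_of_lt_of_le (Cardinal.lt_aleph0_of_finite _) hκ.aleph0_le))
        (fun d => ?_) (colimit.isColimit _)
      rcases d with ⟨b⟩
      cases b
      · exact hS
      · exact hZpres m.idx
    -- a cocone on `pf` with vertex `c.pt`
    set qcone : Cocone pf := ⟨c.pt,
      ⟨fun a => match a with
        | ⟨false⟩ => α ≫ g m.idx
        | ⟨true⟩ => g m.idx,
       by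
        rintro ⟨a⟩ ⟨b⟩ f
        cases a <;> cases b
        · show 𝟙 S ≫ (α ≫ g m.idx) = (α ≫ g m.idx) ≫ 𝟙 c.pt
          simp
        · rcases f with ⟨b'⟩
          cases b'
          · show β ≫ g m.idx = (α ≫ g m.idx) ≫ 𝟙 c.pt
            rw [Category.comp_id]
            exact hαβ.symm
          · show α ≫ g m.idx = (α ≫ g m.idx) ≫ 𝟙 c.pt
            rw [Category.comp_id]
        · exact f.elim
        · show 𝟙 (Z m.idx) ≫ g m.idx = g m.idx ≫ 𝟙 c.pt
          simp⟩⟩ with hqcone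
    obtain ⟨j₂, qA, hqA⟩ := presentable_factor hfilt hc hQpres (colimit.desc _ qcone)
    refine ⟨j₂, colimit.ι pf ⟨true⟩ ≫ qA ≫ l j₂, ?_, ?_⟩
    · exact ((Category.assoc _ _ _).trans (congrArg (colimit.ι pf ⟨true⟩ ≫ ·)
        ((Category.assoc _ _ _).trans ((congrArg (qA ≫ ·) (hg j₂)).trans hqA)))).trans
        (colimit.ι_desc qcone ⟨true⟩)
    · have h1' : α ≫ colimit.ι pf ⟨true⟩ = colimit.ι pf ⟨false⟩ := by
        have := colimit.w pf (show @Quiver.Hom (ParIdx (ULift.{v} Bool)) _ ⟨false⟩ ⟨true⟩ from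
          (⟨true⟩ : ULift.{v} Bool))
        exact this
      have h2' : β ≫ colimit.ι pf ⟨true⟩ = colimit.ι pf ⟨false⟩ := by
        have := colimit.w pf (show @Quiver.Hom (ParIdx (ULift.{v} Bool)) _ ⟨false⟩ ⟨true⟩ from
          (⟨false⟩ : ULift.{v} Bool))
        exact this
      calc α ≫ colimit.ι pf ⟨true⟩ ≫ qA ≫ l j₂
          = (α ≫ colimit.ι pf ⟨true⟩) ≫ qA ≫ l j₂ := (Category.assoc _ _ _).symm
        _ = (β ≫ colimit.ι pf ⟨true⟩) ≫ qA ≫ l j₂ := by rw [h1', h2']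
        _ = β ≫ colimit.ι pf ⟨true⟩ ≫ qA ≫ l j₂ := Category.assoc _ _ _
  -- the canonical cocone is a colimit
  have hcolimE : IsColimit (approxCocone Z g) := by
    let mkc : Cocone (approxDiagram Z g) → Cocone A := fun s =>
      ⟨s.pt, ⟨fun j => l j ≫ s.ι.app ⟨j⟩, by
        intro j j' a
        obtain ⟨mm, ⟨e⟩⟩ := cardinalFiltered_sup hκ hfiltE
          (lt_of_lt_of_le (Cardinal.lt_aleph0_of_finite _) hκ.aleph0_le)
          (fun b : ULift.{v} Bool => bif b.down then (⟨j⟩ : ApproxIdx Z g) else ⟨j'⟩)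
        have e₁ : (⟨j⟩ : ApproxIdx Z g) ⟶ mm := e ⟨true⟩
        have e₂ : (⟨j'⟩ : ApproxIdx Z g) ⟶ mm := e ⟨false⟩
        have hαβ : (l j ≫ e₁.1) ≫ g mm.idx = (A.map a ≫ l j' ≫ e₂.1) ≫ g mm.idx := by
          rw [Category.assoc, e₁.2, hg j]
          rw [Category.assoc, Category.assoc, e₂.2, hg j']
          exact (c.w a).symm
        obtain ⟨m', w, hw, hcoeq⟩ := hcoeqE (A.obj j) (hApres j) mm
          (l j ≫ e₁.1) (A.map a ≫ l j' ≫ e₂.1) hαβ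
        have hsu : (e₁.1 ≫ w) ≫ s.ι.app ⟨m'⟩ = s.ι.app ⟨j⟩ :=
          s.w (show (⟨j⟩ : ApproxIdx Z g) ⟶ (⟨m'⟩ : ApproxIdx Z g) from
            ⟨e₁.1 ≫ w, by rw [Category.assoc, hw, e₁.2]⟩)
        have hsv : (e₂.1 ≫ w) ≫ s.ι.app ⟨m'⟩ = s.ι.app ⟨j'⟩ :=
          s.w (show (⟨j'⟩ : ApproxIdx Z g) ⟶ (⟨m'⟩ : ApproxIdx Z g) from
            ⟨e₂.1 ≫ w, by rw [Category.assoc, hw, e₂.2]⟩)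
        show A.map a ≫ l j' ≫ s.ι.app ⟨j'⟩ = (l j ≫ s.ι.app ⟨j⟩) ≫ 𝟙 _
        rw [Category.comp_id]
        rw [← hsu, ← hsv]
        have hc' : (A.map a ≫ l j' ≫ e₂.1) ≫ w = (l j ≫ e₁.1) ≫ w := by
          simpa [Category.assoc] using hcoeq.symm
        calc A.map a ≫ l j' ≫ (e₂.1 ≫ w) ≫ s.ι.app ⟨m'⟩
            = ((A.map a ≫ l j' ≫ e₂.1) ≫ w) ≫ s.ι.app ⟨m'⟩ := by
              simp only [Category.assoc]
          _ = ((l j ≫ e₁.1) ≫ w) ≫ s.ι.app ⟨m'⟩ := by rw [hc']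
          _ = l j ≫ (e₁.1 ≫ w) ≫ s.ι.app ⟨m'⟩ := by simp only [Category.assoc]⟩⟩
    refine { desc := fun s => hc.desc (mkc s), fac := fun s e => ?_,
             uniq := fun s m hm => ?_ }
    · obtain ⟨j₁, ee, hee⟩ := presentable_factor hfilt hc (hZpres e.idx) (g e.idx)
      have hse : (ee ≫ l j₁) ≫ s.ι.app ⟨j₁⟩ = s.ι.app e :=
        s.w (show e ⟶ (⟨j₁⟩ : ApproxIdx Z g) from ⟨ee ≫ l j₁, by
          rw [Category.assoc, hg j₁, hee]⟩)
      show g e.idx ≫ hc.desc (mkc s) = s.ι.app e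
      rw [← hee, Category.assoc, hc.fac]
      show ee ≫ l j₁ ≫ s.ι.app ⟨j₁⟩ = s.ι.app e
      rw [← hse, Category.assoc]
    · refine hc.hom_ext fun j => ?_
      rw [hc.fac]
      show c.ι.app j ≫ m = l j ≫ s.ι.app ⟨j⟩
      have hmj : g j ≫ m = s.ι.app ⟨j⟩ := hm ⟨j⟩
      exact (congrArg (· ≫ m) (hg j).symm).trans ((Category.assoc _ _ _).trans (congrArg (l j ≫ ·) hmj))
  exact ⟨ApproxIdx Z g, inferInstance, approxDiagram Z g, approxCocone Z g, hfiltE,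
    ⟨hcolimE⟩, rfl, fun e => ⟨hZpres e.idx, hZR e.idx⟩⟩

end Auxiliary

/-- **Corollary 4.10.** Let `K` be a class-locally `κ`-presentable category with a
`κ`-presentable terminal object and `(L, R)` a cofibrantly class-`κ`-generated weak
factorization system. Then `Inj(L) = {X | (X ⟶ 1) ∈ R}` is a class-accessible category
strongly accessibly embedded in `K`. -/
theorem injClass_of_wfs_classAccessible (κ : Cardinal.{v}) (hκ : κ.IsRegular)
    {K : Type u} [Category.{v} K] [Limits.HasTerminal K]
    (hK : ClassLocallyPresentable κ K) (hterm : IsPresentable κ (⊤_ K))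
    (L R : MorphismProperty K) (hwfs : IsWeakFactorizationSystem L R)
    (hgen : CofibrantlyClassGenerated κ L R) :
    IsClassAccessibleCat (ObjectProperty.FullSubcategory fun X : K => R (terminal.from X)) ∧
      StronglyAccessiblyEmbedded (fun X : K => R (terminal.from X)) := by
  have hRrlp : R = rlp L := hwfs.1
  obtain ⟨C, hcc, hLC, hCpres, hfact⟩ := hgen
  haveI : HasColimitsOfSize.{v, v} K := hK.2.2
  set P : K → Prop := fun X => R (terminal.from X) with hPdef
  -- closure under κ-filtered colimits
  have hclosed : ClosedUnderCardinalFilteredColimits κ P := by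
    intro J _ hJ D c hc hD
    exact terminal_lifting hRrlp hLC hCpres hJ hc hD
  -- existence of κ-filtered colimits in the subcategory
  have hhas : HasCardinalFilteredColimits κ (ObjectProperty.FullSubcategory P) := by
    intro J _ hJ
    haveI : HasColimitsOfShape J K := inferInstance
    haveI : ObjectProperty.IsClosedUnderColimitsOfShape P J :=
      ⟨fun X ⟨p⟩ => hclosed J hJ p.diag _ p.isColimit p.prop_diag_obj⟩
    exact hasColimitsOfShape_of_closedUnderColimits J P
  -- the per-object construction
  have main : ∀ X : ObjectProperty.FullSubcategory P, IsFilteredColimitOfPresentables κ X ∧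
      (IsPresentable κ X → IsPresentable κ X.obj) := by
    intro X
    obtain ⟨E, sE, Zd, cc, hfiltE, ⟨hcolim⟩, hpt, hprops⟩ :=
      exists_presentable_diagram κ hκ hK hterm hwfs ⟨C, hcc, hLC, hCpres, hfact⟩ X.obj X.2
    -- transported colimit cocone with vertex `X.obj`
    let cc' : Cocone Zd := ⟨X.obj, ⟨fun e => cc.ι.app e ≫ eqToHom hpt, fun {e e'} h => by
      simp only [Functor.const_obj_map, Category.comp_id]
      rw [← Category.assoc, cc.w h]
      exact (Category.comp_id _).symm⟩⟩
    have hKcolim' : IsColimit cc' :=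
      IsColimit.ofIsoColimit hcolim (Cocones.ext (eqToIso hpt) (fun e => rfl))
    -- the diagram in the subcategory
    let Dsub : E ⥤ ObjectProperty.FullSubcategory P :=
      { obj := fun e => ⟨Zd.obj e, (hprops e).2⟩
        map := fun h => ObjectProperty.homMk (Zd.map h)
        map_id := fun e => InducedCategory.hom_ext (Zd.map_id e)
        map_comp := fun f g' => InducedCategory.hom_ext (Zd.map_comp f g') }
    let csub : Cocone Dsub := ⟨X, ⟨fun e => ObjectProperty.homMk (cc'.ι.app e),
      fun {e e'} h => InducedCategory.hom_ext (cc'.ι.naturality h)⟩⟩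
    let toK : Cocone Dsub → Cocone Zd := fun s =>
      ⟨s.pt.obj, ⟨fun e => (s.ι.app e).hom,
        fun {e e'} h => congrArg InducedCategory.Hom.hom (s.ι.naturality h)⟩⟩
    have hsubcolim : IsColimit csub :=
      { desc := fun s => ObjectProperty.homMk (hKcolim'.desc (toK s))
        fac := fun s e => InducedCategory.hom_ext (hKcolim'.fac (toK s) e)
        uniq := fun s m hm => InducedCategory.hom_ext (hKcolim'.uniq (toK s) m.hom
          (fun e => congrArg InducedCategory.Hom.hom (hm e))) }
    have hpres_sub : ∀ e, IsPresentable κ (Dsub.obj e) := fun e =>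
      isPresentable_fullSubcategory hK.2.2 hclosed (hprops e).2 (hprops e).1
    constructor
    · exact ⟨Cat.of E, Dsub, csub, hfiltE, ⟨hsubcolim⟩, rfl, hpres_sub⟩
    · intro hX
      haveI := hX E hfiltE
      have hmap : IsColimit ((coyoneda.obj (op X)).mapCocone csub) :=
        isColimitOfPreserves _ hsubcolim
      obtain ⟨e, s0, hs0⟩ := Types.jointly_surjective _ hmap (𝟙 X)
      let s1 : X.obj ⟶ Zd.obj e := s0.hom
      have hs0' : s1 ≫ (cc.ι.app e ≫ eqToHom hpt) = 𝟙 X.obj := congrArg InducedCategory.Hom.hom hs0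
      exact isPresentable_of_retract hκ s1 (cc.ι.app e ≫ eqToHom hpt) hs0' (hprops e).1
  refine ⟨⟨κ, hκ, hhas, fun X => (main X).1⟩, ⟨κ, hκ, hclosed, fun X hX => (main X).2 hX⟩⟩

end ClassAcc
end

section
/- Let 𝒦 be a class-λ-accessible category. Then the morphism category 𝒦^→ is class-λ-accessible, its λ-presentable objects are exactly the morphisms of 𝒦 whose domain and codomain are λ-presentable in 𝒦, and both projection functors P₁, P₂: 𝒦^→ → 𝒦 (sending a morphism A → B to A and to B respectively) are strongly class-λ-accessible. Moreover, if 𝒦 is class-locally λ-presentable then so is 𝒦^→. -/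
universe w₂ w₁ w v u u₁ u₂ u₃

open CategoryTheory CategoryTheory.Limits Opposite Order

namespace ClassAcc

/-- Wide span: one root, a family of leaves, with `m d` many arrows root ⟶ leaf d. -/
inductive WideSpan (ι : Type v) (m : ι → Type v) : Type v
  | root
  | leaf (d : ι)

namespace WideSpan

variable {ι : Type v} {m : ι → Type v}

inductive Hom : WideSpan ι m → WideSpan ι m → Type v
  | id (X : WideSpan ι m) : Hom X X
  | arr (d : ι) (x : m d) : Hom .root (.leaf d)

def Hom.comp : ∀ {X Y Z : WideSpan ι m}, Hom X Y → Hom Y Z → Hom X Z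
  | _, _, _, .id _, g => g
  | _, _, _, .arr d x, .id _ => .arr d x

instance : SmallCategory (WideSpan ι m) where
  Hom := Hom
  id := Hom.id
  comp := Hom.comp
  id_comp f := rfl
  comp_id f := by cases f <;> rfl
  assoc f g h := by cases f <;> cases g <;> cases h <;> rfl

def enc : (Σ (a : WideSpan ι m) (b : WideSpan ι m), a ⟶ b) → (WideSpan ι m) ⊕ (Σ d : ι, m d)
  | ⟨_, _, .id X⟩ => .inl X
  | ⟨_, _, .arr d x⟩ => .inr ⟨d, x⟩

lemma enc_injective : Function.Injective (enc (ι := ι) (m := m)) := by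
  rintro ⟨a, b, f⟩ ⟨a', b', f'⟩ h
  change Hom a b at f
  change Hom a' b' at f'
  cases f <;> cases f' <;> simp [enc] at h <;> aesop

def toOption : WideSpan ι m → Option ι
  | .root => none
  | .leaf d => some d

lemma toOption_injective : Function.Injective (toOption (ι := ι) (m := m)) := by
  rintro (_ | d) (_ | d') h <;> simp [toOption] at h <;> aesop

lemma card_lt {κ : Cardinal.{v}} (hκ : Cardinal.aleph0 ≤ κ) (hι : Cardinal.mk ι < κ)
    (hm : Cardinal.mk (Σ d : ι, m d) < κ) :
    Cardinal.mk (Σ (a : WideSpan ι m) (b : WideSpan ι m), a ⟶ b) < κ := by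
  have h1 : Cardinal.mk (WideSpan ι m) < κ := by
    have := Cardinal.mk_le_of_injective (toOption_injective (ι := ι) (m := m))
    refine lt_of_le_of_lt this ?_
    rw [Cardinal.mk_option]
    exact Cardinal.add_lt_of_lt hκ hι (lt_of_lt_of_le Cardinal.one_lt_aleph0 hκ)
  have := Cardinal.mk_le_of_injective (enc_injective (ι := ι) (m := m))
  refine lt_of_le_of_lt this ?_
  rw [Cardinal.mk_sum]
  simpa using Cardinal.add_lt_of_lt hκ h1 hm

/-- The functor determined by root/leaf images and arrow images. -/
def functor {J : Type w} [Category.{w₁} J] (j₀ : J) (jf : ι → J)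
    (ar : ∀ d, m d → (j₀ ⟶ jf d)) : WideSpan ι m ⥤ J where
  obj X := match X with
    | .root => j₀
    | .leaf d => jf d
  map f := match f with
    | .id _ => 𝟙 _
    | .arr d x => ar d x
  map_id X := rfl
  map_comp f g := by
    change Hom _ _ at f g
    cases f <;> cases g <;>
      first
        | exact (Category.id_comp _).symm
        | exact (Category.comp_id _).symm

end WideSpan

section Filtered

variable {κ : Cardinal.{v}}

lemma exists_cocone_wideSpan {J : Type w} [Category.{w₁} J] (hJ : IsCardinalFiltered J κ)
    {ι : Type v} {m : ι → Type v} (hκ : Cardinal.aleph0 ≤ κ) (hι : Cardinal.mk ι < κ)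
    (hm : Cardinal.mk (Σ d : ι, m d) < κ) (j₀ : J) (jf : ι → J)
    (ar : ∀ d, m d → (j₀ ⟶ jf d)) :
    ∃ (z : J) (r : j₀ ⟶ z) (l : ∀ d, jf d ⟶ z), ∀ d x, ar d x ≫ l d = r := by
  obtain ⟨c⟩ := hJ (WideSpan ι m) (WideSpan.card_lt hκ hι hm) (WideSpan.functor j₀ jf ar)
  refine ⟨c.pt, c.ι.app .root, fun d => c.ι.app (.leaf d), fun d x => ?_⟩
  exact c.w (WideSpan.Hom.arr d x)

lemma isFiltered_of_isCardinalFiltered {J : Type w} [Category.{w₁} J]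
    (hJ : IsCardinalFiltered J κ) (hκ : Cardinal.aleph0 ≤ κ) : IsFiltered J := by
  have hne : Nonempty J := by
    have hempty : IsEmpty (Σ (a : Discrete PEmpty.{v+1}) (b : Discrete PEmpty.{v+1}), a ⟶ b) :=
      ⟨fun x => x.1.as.elim⟩
    have h0 : Cardinal.mk (Σ (a : Discrete PEmpty.{v+1}) (b : Discrete PEmpty.{v+1}), a ⟶ b) < κ := by
      rw [Cardinal.mk_eq_zero]
      exact lt_of_lt_of_le Cardinal.aleph0_pos hκ
    obtain ⟨c⟩ := hJ _ h0 (Functor.empty J)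
    exact ⟨c.pt⟩
  have hobjs : ∀ X Y : J, ∃ (Z : J) (_ : X ⟶ Z) (_ : Y ⟶ Z), True := by
    intro X Y
    obtain ⟨z, r, l, -⟩ := exists_cocone_wideSpan hJ (ι := PUnit.{v+1}) (m := fun _ => PEmpty.{v+1})
      hκ (by simpa using lt_of_lt_of_le Cardinal.one_lt_aleph0 hκ)
      (by
        have : IsEmpty (Σ _ : PUnit.{v+1}, PEmpty.{v+1}) := ⟨fun x => x.2.elim⟩
        rw [Cardinal.mk_eq_zero]
        exact lt_of_lt_of_le Cardinal.aleph0_pos hκ)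
      X (fun _ => Y) (fun _ x => x.elim)
    exact ⟨z, r, l PUnit.unit, trivial⟩
  have hmaps : ∀ ⦃X Y : J⦄ (f g : X ⟶ Y), ∃ (Z : J) (h : Y ⟶ Z), f ≫ h = g ≫ h := by
    intro X Y f g
    obtain ⟨z, r, l, hl⟩ := exists_cocone_wideSpan hJ (ι := PUnit.{v+1})
      (m := fun _ => ULift.{v} Bool) hκ
      (by simpa using lt_of_lt_of_le Cardinal.one_lt_aleph0 hκ)
      (by
        refine lt_of_lt_of_le ?_ hκ
        exact Cardinal.lt_aleph0_of_finite _)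
      X (fun _ => Y) (fun _ x => if x.down then f else g)
    refine ⟨z, l PUnit.unit, ?_⟩
    have h1 := hl PUnit.unit ⟨true⟩
    have h2 := hl PUnit.unit ⟨false⟩
    simp at h1 h2
    rw [h1, h2]
  letI : IsFilteredOrEmpty J := ⟨hobjs, hmaps⟩
  exact { nonempty := hne }

end Filtered
section Presentable

variable {K : Type u} [Category.{v} K] {κ : Cardinal.{v}}

lemma factor_of_isPresentable {X : K} (hX : IsPresentable κ X) {J : Type v} [SmallCategory J]
    (hJ : IsCardinalFiltered J κ) {G : J ⥤ K} {c : Cocone G} (hc : IsColimit c) (g : X ⟶ c.pt) :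
    ∃ (j : J) (h : X ⟶ G.obj j), h ≫ c.ι.app j = g := by
  haveI := hX J hJ
  obtain ⟨j, y, hy⟩ := Types.jointly_surjective (G ⋙ coyoneda.obj (op X))
    (isColimitOfPreserves (coyoneda.obj (op X)) hc) g
  exact ⟨j, y, hy⟩

lemma equalize_of_isPresentable {X : K} (hX : IsPresentable κ X) (hκ : Cardinal.aleph0 ≤ κ)
    {J : Type v} [SmallCategory J] (hJ : IsCardinalFiltered J κ) {G : J ⥤ K} {c : Cocone G}
    (hc : IsColimit c) {j j' : J} (a : X ⟶ G.obj j) (b : X ⟶ G.obj j')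
    (hab : a ≫ c.ι.app j = b ≫ c.ι.app j') :
    ∃ (k : J) (s : j ⟶ k) (t : j' ⟶ k), a ≫ G.map s = b ≫ G.map t := by
  haveI : IsFiltered J := isFiltered_of_isCardinalFiltered hJ hκ
  haveI := hX J hJ
  exact (Types.FilteredColimit.isColimit_eq_iff (G ⋙ coyoneda.obj (op X))
    (isColimitOfPreserves (coyoneda.obj (op X)) hc) (i := j) (j := j')
    (xi := a) (xj := b)).mp hab

lemma equalize_of_isPresentable' {X : K} (hX : IsPresentable κ X) (hκ : Cardinal.aleph0 ≤ κ)
    {J : Type v} [SmallCategory J] (hJ : IsCardinalFiltered J κ) {G : J ⥤ K} {c : Cocone G}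
    (hc : IsColimit c) {j : J} (a b : X ⟶ G.obj j)
    (hab : a ≫ c.ι.app j = b ≫ c.ι.app j) :
    ∃ (k : J) (t : j ⟶ k), a ≫ G.map t = b ≫ G.map t := by
  haveI : IsFiltered J := isFiltered_of_isCardinalFiltered hJ hκ
  obtain ⟨k, s, t, h⟩ := equalize_of_isPresentable hX hκ hJ hc a b hab
  refine ⟨IsFiltered.coeq s t, s ≫ IsFiltered.coeqHom s t, ?_⟩
  calc a ≫ G.map (s ≫ IsFiltered.coeqHom s t)
      = (a ≫ G.map s) ≫ G.map (IsFiltered.coeqHom s t) := by simp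
    _ = (b ≫ G.map t) ≫ G.map (IsFiltered.coeqHom s t) := by rw [h]
    _ = b ≫ G.map (t ≫ IsFiltered.coeqHom s t) := by simp
    _ = b ≫ G.map (s ≫ IsFiltered.coeqHom s t) := by rw [← IsFiltered.coeq_condition]

lemma isPresentable_mk {X : K} (hκ : Cardinal.aleph0 ≤ κ)
    (h : ∀ (J : Type v) [SmallCategory J], IsCardinalFiltered J κ →
      ∀ (G : J ⥤ K) (c : Cocone G), IsColimit c →
        (∀ g : X ⟶ c.pt, ∃ (j : J) (y : X ⟶ G.obj j), y ≫ c.ι.app j = g) ∧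
        (∀ (j j' : J) (a : X ⟶ G.obj j) (b : X ⟶ G.obj j'),
          a ≫ c.ι.app j = b ≫ c.ι.app j' →
          ∃ (k : J) (s : j ⟶ k) (t : j' ⟶ k), a ≫ G.map s = b ≫ G.map t)) :
    IsPresentable κ X := by
  intro J _ hJ
  haveI : IsFiltered J := isFiltered_of_isCardinalFiltered hJ hκ
  constructor
  intro G
  constructor
  intro c hc
  obtain ⟨hsurj, hinj⟩ := h J hJ G c hc
  refine ⟨Types.FilteredColimit.isColimitOf _ _ ?_ ?_⟩
  · intro x
    obtain ⟨j, y, hy⟩ := hsurj x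
    exact ⟨j, y, hy.symm⟩
  · intro i j xi xj hx
    exact hinj i j xi xj hx

lemma isPresentable_of_retract_s19 (hκ : Cardinal.aleph0 ≤ κ) {X Y : K} (i : Y ⟶ X) (r : X ⟶ Y)
    (hir : i ≫ r = 𝟙 Y) (hX : IsPresentable κ X) : IsPresentable κ Y := by
  refine isPresentable_mk hκ (fun J _ hJ G c hc => ⟨?_, ?_⟩)
  · intro g
    obtain ⟨j, y, hy⟩ := factor_of_isPresentable hX hJ hc (r ≫ g)
    refine ⟨j, i ≫ y, ?_⟩
    rw [Category.assoc, hy, ← Category.assoc, hir, Category.id_comp]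
  · intro j j' a b hab
    have : (r ≫ a) ≫ c.ι.app j = (r ≫ b) ≫ c.ι.app j' := by
      rw [Category.assoc, Category.assoc, hab]
    obtain ⟨k, s, t, h⟩ := equalize_of_isPresentable hX hκ hJ hc (r ≫ a) (r ≫ b) this
    refine ⟨k, s, t, ?_⟩
    have := congrArg (fun z => i ≫ z) h
    simpa [← Category.assoc, hir] using this

end Presentable

section ArrowColimits

variable {K : Type u} [Category.{v} K]

@[simp] lemma arrow_leftFunc_obj' (X : Arrow K) : Arrow.leftFunc.obj X = X.left := rfl
@[simp] lemma arrow_rightFunc_obj' (X : Arrow K) : Arrow.rightFunc.obj X = X.right := rfl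
@[simp] lemma arrow_leftFunc_map' {X Y : Arrow K} (f : X ⟶ Y) : Arrow.leftFunc.map f = f.left := rfl
@[simp] lemma arrow_rightFunc_map' {X Y : Arrow K} (f : X ⟶ Y) :
    Arrow.rightFunc.map f = f.right := rfl

/-- Build a colimit in the arrow category from componentwise colimits. -/
def isColimitArrowOfComponents {J : Type v} [SmallCategory J] {D : J ⥤ Arrow K} (c : Cocone D)
    (hL : IsColimit (Arrow.leftFunc.mapCocone c))
    (hR : IsColimit (Arrow.rightFunc.mapCocone c)) : IsColimit c where
  desc s :=
    { left := hL.desc (Arrow.leftFunc.mapCocone s)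
      right := hR.desc (Arrow.rightFunc.mapCocone s)
      w := by
        apply hL.hom_ext
        intro j
        have h1 := hL.fac (Arrow.leftFunc.mapCocone s) j
        have h2 := hR.fac (Arrow.rightFunc.mapCocone s) j
        have h3 := Arrow.w (s.ι.app j)
        have h4 := Arrow.w (c.ι.app j)
        dsimp at h1 h2 h3 h4 ⊢
        rw [← Category.assoc]
        exact ((congrArg (· ≫ s.pt.hom) h1).trans h3).trans
          (((reassoc_of% h4) _).trans (congrArg ((D.obj j).hom ≫ ·) h2)).symm }
  fac s j := by
    apply Arrow.hom_ext
    · exact hL.fac (Arrow.leftFunc.mapCocone s) j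
    · exact hR.fac (Arrow.rightFunc.mapCocone s) j
  uniq s m hm := by
    apply Arrow.hom_ext
    · exact hL.uniq (Arrow.leftFunc.mapCocone s) m.left
        (fun j => congrArg CommaMorphism.left (hm j))
    · exact hR.uniq (Arrow.rightFunc.mapCocone s) m.right
        (fun j => congrArg CommaMorphism.right (hm j))

variable {J : Type v} [SmallCategory J] [HasColimitsOfShape J K] {D : J ⥤ Arrow K} {c : Cocone D}

/-- The pointwise colimit cocone over a diagram of arrows. -/
noncomputable def arrowPointwiseCocone (D : J ⥤ Arrow K) : Cocone D where
  pt := Arrow.mk (colimit.desc (D ⋙ Arrow.leftFunc)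
    { pt := colimit (D ⋙ Arrow.rightFunc)
      ι :=
        { app := fun j => (D.obj j).hom ≫ colimit.ι (D ⋙ Arrow.rightFunc) j
          naturality := fun j j' m => by
            dsimp
            rw [Category.comp_id]; refine (Arrow.w_assoc (D.map m) _).trans ?_
            congr 1
            exact colimit.w (D ⋙ Arrow.rightFunc) m } })
  ι :=
    { app := fun j => Arrow.homMk (u := colimit.ι (D ⋙ Arrow.leftFunc) j)
        (v := colimit.ι (D ⋙ Arrow.rightFunc) j)
        (colimit.ι_desc _ j)
      naturality := fun j j' m => by
        apply Arrow.hom_ext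
        · exact (colimit.w (D ⋙ Arrow.leftFunc) m).trans (Category.comp_id _).symm
        · exact (colimit.w (D ⋙ Arrow.rightFunc) m).trans (Category.comp_id _).symm }

noncomputable def arrowPointwiseCoconeLeftIsColimit (D : J ⥤ Arrow K) :
    IsColimit (Arrow.leftFunc.mapCocone (arrowPointwiseCocone D)) :=
  IsColimit.ofIsoColimit (colimit.isColimit (D ⋙ Arrow.leftFunc))
    (Cocones.ext (Iso.refl _) (by intro j; exact Category.comp_id _))

noncomputable def arrowPointwiseCoconeRightIsColimit (D : J ⥤ Arrow K) :
    IsColimit (Arrow.rightFunc.mapCocone (arrowPointwiseCocone D)) :=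
  IsColimit.ofIsoColimit (colimit.isColimit (D ⋙ Arrow.rightFunc))
    (Cocones.ext (Iso.refl _) (by intro j; exact Category.comp_id _))

noncomputable def arrowPointwiseIsColimit (D : J ⥤ Arrow K) :
    IsColimit (arrowPointwiseCocone D) :=
  isColimitArrowOfComponents _ (arrowPointwiseCoconeLeftIsColimit D)
    (arrowPointwiseCoconeRightIsColimit D)

noncomputable def leftMapIsColimit (hc : IsColimit c) :
    IsColimit (Arrow.leftFunc.mapCocone c) :=
  IsColimit.ofIsoColimit (arrowPointwiseCoconeLeftIsColimit D)
    ((Cocones.functoriality D Arrow.leftFunc).mapIso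
      (IsColimit.uniqueUpToIso (arrowPointwiseIsColimit D) hc))

noncomputable def rightMapIsColimit (hc : IsColimit c) :
    IsColimit (Arrow.rightFunc.mapCocone c) :=
  IsColimit.ofIsoColimit (arrowPointwiseCoconeRightIsColimit D)
    ((Cocones.functoriality D Arrow.rightFunc).mapIso
      (IsColimit.uniqueUpToIso (arrowPointwiseIsColimit D) hc))

end ArrowColimits
section ArrowPresentable

variable {K : Type u} [Category.{v} K] {κ : Cardinal.{v}}

lemma arrow_isPresentable_of_components (hκ : Cardinal.aleph0 ≤ κ)
    (hcol : HasCardinalFilteredColimits κ K) {f : Arrow K}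
    (hl : IsPresentable κ f.left) (hr : IsPresentable κ f.right) : IsPresentable κ f := by
  refine isPresentable_mk hκ (fun J _ hJ G c hc => ?_)
  haveI : HasColimitsOfShape J K := hcol J hJ
  haveI : IsFiltered J := isFiltered_of_isCardinalFiltered hJ hκ
  have hcL : IsColimit (Arrow.leftFunc.mapCocone c) := leftMapIsColimit hc
  have hcR : IsColimit (Arrow.rightFunc.mapCocone c) := rightMapIsColimit hc
  constructor
  · intro g
    obtain ⟨j₁, u₁, hu₁⟩ := factor_of_isPresentable hl hJ hcL g.left
    obtain ⟨j₂, v₂, hv₂⟩ := factor_of_isPresentable hr hJ hcR g.right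
    simp only [Functor.mapCocone_ι_app, Arrow.leftFunc_map, Arrow.rightFunc_map] at hu₁ hv₂
    set j₃ := IsFiltered.max j₁ j₂ with hj₃
    set u₃ : f.left ⟶ (G.obj j₃).left := u₁ ≫ (G.map (IsFiltered.leftToMax j₁ j₂)).left with hu₃def
    set v₃ : f.right ⟶ (G.obj j₃).right :=
      v₂ ≫ (G.map (IsFiltered.rightToMax j₁ j₂)).right with hv₃def
    have hwl : (G.map (IsFiltered.leftToMax j₁ j₂)).left ≫ (c.ι.app j₃).left
        = (c.ι.app j₁).left := congrArg CommaMorphism.left (c.w (IsFiltered.leftToMax j₁ j₂))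
    have hwr : (G.map (IsFiltered.rightToMax j₁ j₂)).right ≫ (c.ι.app j₃).right
        = (c.ι.app j₂).right := congrArg CommaMorphism.right (c.w (IsFiltered.rightToMax j₁ j₂))
    have hu₃ : u₃ ≫ (c.ι.app j₃).left = g.left := by
      rw [hu₃def]; exact (Category.assoc _ _ _).trans ((congrArg (u₁ ≫ ·) hwl).trans hu₁)
    have hv₃ : v₃ ≫ (c.ι.app j₃).right = g.right := by
      rw [hv₃def]; exact (Category.assoc _ _ _).trans ((congrArg (v₂ ≫ ·) hwr).trans hv₂)
    have hwc := Arrow.w (c.ι.app j₃)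
    have hwg := Arrow.w g
    dsimp at hwc hwg
    have hsq : (u₃ ≫ (G.obj j₃).hom) ≫ (Arrow.rightFunc.mapCocone c).ι.app j₃
        = (f.hom ≫ v₃) ≫ (Arrow.rightFunc.mapCocone c).ι.app j₃ := by
      simp only [Functor.mapCocone_ι_app, Arrow.rightFunc_map]
      show (u₃ ≫ (G.obj j₃).hom) ≫ (c.ι.app j₃).right = (f.hom ≫ v₃) ≫ (c.ι.app j₃).right
      rw [Category.assoc, ← hwc, ← Category.assoc, hu₃, hwg, Category.assoc, hv₃]
    obtain ⟨j₄, t, ht⟩ := equalize_of_isPresentable' hl hκ hJ hcR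
      (u₃ ≫ (G.obj j₃).hom) (f.hom ≫ v₃) hsq
    have ht' : (u₃ ≫ (G.obj j₃).hom) ≫ (G.map t).right = (f.hom ≫ v₃) ≫ (G.map t).right := ht
    have hwt := Arrow.w (G.map t)
    refine ⟨j₄, Arrow.homMk (u := u₃ ≫ (G.map t).left) (v := v₃ ≫ (G.map t).right) ?_, ?_⟩
    · rw [Category.assoc, hwt, ← Category.assoc, ht']
      simp
    · apply Arrow.hom_ext
      · have hwl' : (G.map t).left ≫ (c.ι.app j₄).left = (c.ι.app j₃).left :=
          congrArg CommaMorphism.left (c.w t)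
        show (u₃ ≫ (G.map t).left) ≫ (c.ι.app j₄).left = g.left
        rw [Category.assoc, hwl', hu₃]
      · have hwr' : (G.map t).right ≫ (c.ι.app j₄).right = (c.ι.app j₃).right :=
          congrArg CommaMorphism.right (c.w t)
        show (v₃ ≫ (G.map t).right) ≫ (c.ι.app j₄).right = g.right
        rw [Category.assoc, hwr', hv₃]
  · intro j j' a b hab
    have habL : a.left ≫ (Arrow.leftFunc.mapCocone c).ι.app j
        = b.left ≫ (Arrow.leftFunc.mapCocone c).ι.app j' := congrArg CommaMorphism.left hab
    obtain ⟨k₁, s₁, t₁, h₁⟩ := equalize_of_isPresentable hl hκ hJ hcL a.left b.left habL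
    have habR : (a.right ≫ (G.map s₁).right) ≫ (Arrow.rightFunc.mapCocone c).ι.app k₁
        = (b.right ≫ (G.map t₁).right) ≫ (Arrow.rightFunc.mapCocone c).ι.app k₁ := by
      simp only [Functor.mapCocone_ι_app, Arrow.rightFunc_map]
      have hw1 : (G.map s₁).right ≫ (c.ι.app k₁).right = (c.ι.app j).right :=
        congrArg CommaMorphism.right (c.w s₁)
      have hw2 : (G.map t₁).right ≫ (c.ι.app k₁).right = (c.ι.app j').right :=
        congrArg CommaMorphism.right (c.w t₁)
      show (a.right ≫ (G.map s₁).right) ≫ (c.ι.app k₁).right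
        = (b.right ≫ (G.map t₁).right) ≫ (c.ι.app k₁).right
      rw [Category.assoc, Category.assoc, hw1, hw2]
      exact congrArg CommaMorphism.right hab
    obtain ⟨k₂, t₂, h₂⟩ := equalize_of_isPresentable' hr hκ hJ hcR _ _ habR
    refine ⟨k₂, s₁ ≫ t₂, t₁ ≫ t₂, ?_⟩
    apply Arrow.hom_ext
    · have h₁' : a.left ≫ (G.map s₁).left = b.left ≫ (G.map t₁).left := h₁
      dsimp
      rw [Functor.map_comp, Functor.map_comp]
      show a.left ≫ ((G.map s₁) ≫ (G.map t₂)).left = b.left ≫ ((G.map t₁) ≫ (G.map t₂)).left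
      rw [Arrow.comp_left, Arrow.comp_left, ← Category.assoc, ← Category.assoc, h₁']
    · have h₂' : (a.right ≫ (G.map s₁).right) ≫ (G.map t₂).right
          = (b.right ≫ (G.map t₁).right) ≫ (G.map t₂).right := h₂
      dsimp
      rw [Functor.map_comp, Functor.map_comp]
      show a.right ≫ ((G.map s₁) ≫ (G.map t₂)).right = b.right ≫ ((G.map t₁) ≫ (G.map t₂)).right
      rw [Arrow.comp_right, Arrow.comp_right, ← Category.assoc, ← Category.assoc]
      exact h₂'

end ArrowPresentable

section PA

variable {K : Type u} [Category.{v} K] {κ : Cardinal.{v}}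
variable {I : Type v} [SmallCategory I] {J : Type v} [SmallCategory J]

/-- An object of the approximating category: a pair of indices together with a morphism
between the corresponding stages, compatible with the colimit cocones. -/
structure PA (DA : I ⥤ K) (DB : J ⥤ K) (cA : Cocone DA) (cB : Cocone DB)
    (φ : cA.pt ⟶ cB.pt) : Type v where
  i : I
  j : J
  u : DA.obj i ⟶ DB.obj j
  w : u ≫ cB.ι.app j = cA.ι.app i ≫ φ

variable {DA : I ⥤ K} {DB : J ⥤ K} {cA : Cocone DA} {cB : Cocone DB} {φ : cA.pt ⟶ cB.pt}

@[ext]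
structure PAHom (x y : PA DA DB cA cB φ) : Type v where
  p : x.i ⟶ y.i
  q : x.j ⟶ y.j
  w : DA.map p ≫ y.u = x.u ≫ DB.map q

instance : SmallCategory (PA DA DB cA cB φ) where
  Hom := PAHom
  id x := ⟨𝟙 x.i, 𝟙 x.j, by simp⟩
  comp f g := ⟨f.p ≫ g.p, f.q ≫ g.q, by
    rw [Functor.map_comp, Functor.map_comp, Category.assoc, g.w, ← Category.assoc, f.w,
      Category.assoc]⟩
  id_comp f := by apply PAHom.ext <;> simp
  comp_id f := by apply PAHom.ext <;> simp
  assoc f g h := by apply PAHom.ext <;> simp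

@[simp] lemma PA.id_p (x : PA DA DB cA cB φ) : (𝟙 x : x ⟶ x).p = 𝟙 x.i := rfl
@[simp] lemma PA.id_q (x : PA DA DB cA cB φ) : (𝟙 x : x ⟶ x).q = 𝟙 x.j := rfl
@[simp] lemma PA.comp_p {x y z : PA DA DB cA cB φ} (f : x ⟶ y) (g : y ⟶ z) :
    (f ≫ g).p = f.p ≫ g.p := rfl
@[simp] lemma PA.comp_q {x y z : PA DA DB cA cB φ} (f : x ⟶ y) (g : y ⟶ z) :
    (f ≫ g).q = f.q ≫ g.q := rfl

variable (DA DB cA cB φ)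

/-- First projection. -/
@[simps]
def paI : PA DA DB cA cB φ ⥤ I where
  obj e := e.i
  map m := m.p
  map_id _ := rfl
  map_comp _ _ := rfl

/-- Second projection. -/
@[simps]
def paJ : PA DA DB cA cB φ ⥤ J where
  obj e := e.j
  map m := m.q
  map_id _ := rfl
  map_comp _ _ := rfl

/-- The canonical diagram of arrows. -/
@[simps]
def paDiagram : PA DA DB cA cB φ ⥤ Arrow K where
  obj e := Arrow.mk e.u
  map m := Arrow.homMk (u := DA.map m.p) (v := DB.map m.q) m.w
  map_id x := by apply Arrow.hom_ext <;> simp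
  map_comp m₁ m₂ := by apply Arrow.hom_ext <;> simp

/-- The canonical cocone on the diagram of arrows, with point `φ`. -/
def paCocone : Cocone (paDiagram DA DB cA cB φ) where
  pt := Arrow.mk φ
  ι :=
    { app := fun e => Arrow.homMk (u := cA.ι.app e.i) (v := cB.ι.app e.j) e.w.symm
      naturality := fun e e' m => by
        apply Arrow.hom_ext
        · simpa [paDiagram] using cA.w m.p
        · simpa [paDiagram] using cB.w m.q }

variable {DA DB cA cB φ}

lemma pa_extend (hκ : Cardinal.aleph0 ≤ κ) (hJc : IsCardinalFiltered J κ) (hcB : IsColimit cB)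
    (presA : ∀ i : I, IsPresentable κ (DA.obj i)) (e : PA DA DB cA cB φ) {i₂ : I}
    (q : e.i ⟶ i₂) :
    ∃ (j₂ : J) (u₂ : DA.obj i₂ ⟶ DB.obj j₂) (w₂ : u₂ ≫ cB.ι.app j₂ = cA.ι.app i₂ ≫ φ)
      (r : e.j ⟶ j₂), DA.map q ≫ u₂ = e.u ≫ DB.map r := by
  obtain ⟨j₃, w, hw⟩ := factor_of_isPresentable (presA i₂) hJc hcB (cA.ι.app i₂ ≫ φ)
  have hab : (DA.map q ≫ w) ≫ cB.ι.app j₃ = e.u ≫ cB.ι.app e.j := by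
    rw [Category.assoc, hw, ← Category.assoc, cA.w q, e.w]
  obtain ⟨k, s, t, h⟩ := equalize_of_isPresentable (presA e.i) hκ hJc hcB (DA.map q ≫ w) e.u hab
  refine ⟨k, w ≫ DB.map s, ?_, t, ?_⟩
  · rw [Category.assoc, cB.w s, hw]
  · rw [← Category.assoc, h]

lemma pa_isCardinalFiltered (hκ : Cardinal.aleph0 ≤ κ) (hI : IsCardinalFiltered I κ)
    (hJc : IsCardinalFiltered J κ) (hcB : IsColimit cB)
    (presA : ∀ i : I, IsPresentable κ (DA.obj i)) :
    IsCardinalFiltered (PA DA DB cA cB φ) κ := by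
  intro D _ hD F
  haveI : IsFiltered J := isFiltered_of_isCardinalFiltered hJc hκ
  obtain ⟨cI⟩ := hI D hD (F ⋙ paI DA DB cA cB φ)
  obtain ⟨cJ⟩ := hJc D hD (F ⋙ paJ DA DB cA cB φ)
  obtain ⟨j₁, w, hw⟩ := factor_of_isPresentable (presA cI.pt) hJc hcB (cA.ι.app cI.pt ≫ φ)
  set jm := IsFiltered.max j₁ cJ.pt with hjm
  set w' : DA.obj cI.pt ⟶ DB.obj jm := w ≫ DB.map (IsFiltered.leftToMax j₁ cJ.pt) with hw'def
  have hw' : w' ≫ cB.ι.app jm = cA.ι.app cI.pt ≫ φ := by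
    rw [hw'def, Category.assoc, cB.w, hw]
  have key : ∀ d : D, ∃ (k : J) (t : jm ⟶ k),
      (DA.map (cI.ι.app d) ≫ w') ≫ DB.map t
        = ((F.obj d).u ≫ DB.map (cJ.ι.app d ≫ IsFiltered.rightToMax j₁ cJ.pt)) ≫ DB.map t := by
    intro d
    apply equalize_of_isPresentable' (presA (F.obj d).i) hκ hJc hcB
    have h1 : DA.map (cI.ι.app d) ≫ cA.ι.app cI.pt = cA.ι.app (F.obj d).i :=
      cA.w (cI.ι.app d)
    have h2 : DB.map (cJ.ι.app d) ≫ cB.ι.app cJ.pt = cB.ι.app (F.obj d).j :=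
      cB.w (cJ.ι.app d)
    show (DA.map (cI.ι.app d) ≫ w') ≫ cB.ι.app jm
      = ((F.obj d).u ≫ DB.map (cJ.ι.app d ≫ IsFiltered.rightToMax j₁ cJ.pt)) ≫ cB.ι.app jm
    rw [Category.assoc, hw', ← Category.assoc, h1, Category.assoc]
    have e : DB.map (cJ.ι.app d ≫ IsFiltered.rightToMax j₁ cJ.pt) ≫ cB.ι.app jm
        = cB.ι.app (F.obj d).j := by
      rw [Functor.map_comp, Category.assoc, cB.w (IsFiltered.rightToMax j₁ cJ.pt), h2]
    exact (F.obj d).w.symm.trans (congrArg ((F.obj d).u ≫ ·) e).symm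
  choose k t ht using key
  have hmkD : Cardinal.mk D < κ := by
    refine lt_of_le_of_lt (Cardinal.mk_le_of_injective
      (f := fun d : D => (⟨d, d, 𝟙 d⟩ : Σ (a : D) (b : D), a ⟶ b)) ?_) hD
    intro a b h
    exact congrArg Sigma.fst h
  obtain ⟨z, rfan, lfan, hfan⟩ := exists_cocone_wideSpan hJc (ι := D)
    (m := fun _ => PUnit.{v+1}) hκ hmkD
    (by rw [Cardinal.mk_congr (Equiv.sigmaPUnit D)]; exact hmkD) jm k (fun d _ => t d)
  refine ⟨⟨⟨cI.pt, z, w' ≫ DB.map rfan, by rw [Category.assoc, cB.w, hw']⟩,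
    { app := fun d => ⟨cI.ι.app d,
        cJ.ι.app d ≫ IsFiltered.rightToMax j₁ cJ.pt ≫ rfan, ?_⟩
      naturality := fun d d' m => ?_ }⟩⟩
  · -- the square condition for the leg at d
    show DA.map (cI.ι.app d) ≫ (w' ≫ DB.map rfan)
        = (F.obj d).u ≫ DB.map (cJ.ι.app d ≫ IsFiltered.rightToMax j₁ cJ.pt ≫ rfan)
    rw [← hfan d PUnit.unit]
    calc DA.map (cI.ι.app d) ≫ w' ≫ DB.map (t d ≫ lfan d)
        = ((DA.map (cI.ι.app d) ≫ w') ≫ DB.map (t d)) ≫ DB.map (lfan d) := by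
          rw [Functor.map_comp]; simp only [Category.assoc]
      _ = ((((F.obj d).u ≫ DB.map (cJ.ι.app d ≫ IsFiltered.rightToMax j₁ cJ.pt))
            ≫ DB.map (t d)) ≫ DB.map (lfan d) : DA.obj ((F ⋙ paI DA DB cA cB φ).obj d) ⟶ DB.obj z)
            := congrArg (· ≫ DB.map (lfan d)) (ht d)
      _ = ((F.obj d).u ≫ DB.map (cJ.ι.app d ≫ IsFiltered.rightToMax j₁ cJ.pt ≫ t d ≫ lfan d) :
            DA.obj ((F ⋙ paI DA DB cA cB φ).obj d) ⟶ DB.obj z) :=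
          (Category.assoc _ _ _).trans ((Category.assoc _ _ _).trans
            (congrArg ((F.obj d).u ≫ ·) (by simp only [← Functor.map_comp]; exact congrArg DB.map (Category.assoc _ _ _))))
  · apply PAHom.ext
    · have h1 : (F.map m).p ≫ cI.ι.app d' = cI.ι.app d := cI.w m
      simpa using h1
    · have h2 : (F.map m).q ≫ cJ.ι.app d' = cJ.ι.app d := cJ.w m
      have := congrArg (fun h => h ≫ IsFiltered.rightToMax j₁ cJ.pt ≫ rfan) h2
      simpa using (Category.assoc _ _ _).symm.trans this

lemma pa_final_I (hκ : Cardinal.aleph0 ≤ κ) (hI : IsCardinalFiltered I κ)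
    (hJc : IsCardinalFiltered J κ) (hcB : IsColimit cB)
    (presA : ∀ i : I, IsPresentable κ (DA.obj i)) :
    (paI DA DB cA cB φ).Final := by
  haveI : IsFiltered (PA DA DB cA cB φ) :=
    isFiltered_of_isCardinalFiltered (pa_isCardinalFiltered hκ hI hJc hcB presA) hκ
  haveI : IsFiltered I := isFiltered_of_isCardinalFiltered hI hκ
  apply Functor.final_of_exists_of_isFiltered
  · intro i
    obtain ⟨j, u, hu⟩ := factor_of_isPresentable (presA i) hJc hcB (cA.ι.app i ≫ φ)
    exact ⟨⟨i, j, u, hu⟩, ⟨𝟙 i⟩⟩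
  · intro i e s s'
    obtain ⟨j₂, u₂, w₂, r, hsq⟩ := pa_extend hκ hJc hcB presA e (IsFiltered.coeqHom s s')
    exact ⟨⟨_, j₂, u₂, w₂⟩, ⟨IsFiltered.coeqHom s s', r, hsq⟩, IsFiltered.coeq_condition s s'⟩

lemma pa_final_J (hκ : Cardinal.aleph0 ≤ κ) (hI : IsCardinalFiltered I κ)
    (hJc : IsCardinalFiltered J κ) (hcB : IsColimit cB)
    (presA : ∀ i : I, IsPresentable κ (DA.obj i)) :
    (paJ DA DB cA cB φ).Final := by
  haveI : IsFiltered (PA DA DB cA cB φ) :=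
    isFiltered_of_isCardinalFiltered (pa_isCardinalFiltered hκ hI hJc hcB presA) hκ
  haveI : IsFiltered I := isFiltered_of_isCardinalFiltered hI hκ
  haveI : IsFiltered J := isFiltered_of_isCardinalFiltered hJc hκ
  apply Functor.final_of_exists_of_isFiltered
  · intro j
    obtain ⟨i₀⟩ := IsFiltered.nonempty (C := I)
    obtain ⟨j₁, u, hu⟩ := factor_of_isPresentable (presA i₀) hJc hcB (cA.ι.app i₀ ≫ φ)
    exact ⟨⟨i₀, IsFiltered.max j j₁, u ≫ DB.map (IsFiltered.rightToMax j j₁),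
      by rw [Category.assoc, cB.w, hu]⟩, ⟨IsFiltered.leftToMax j j₁⟩⟩
  · intro j e s s'
    refine ⟨⟨e.i, IsFiltered.coeq s s', e.u ≫ DB.map (IsFiltered.coeqHom s s'),
      by rw [Category.assoc]; exact (congrArg (e.u ≫ ·) (cB.w _)).trans e.w⟩, ⟨𝟙 e.i, IsFiltered.coeqHom s s', by simp⟩,
      IsFiltered.coeq_condition s s'⟩

noncomputable def paCoconeIsColimit (hκ : Cardinal.aleph0 ≤ κ) (hI : IsCardinalFiltered I κ)
    (hJc : IsCardinalFiltered J κ) (hcA : IsColimit cA) (hcB : IsColimit cB)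
    (presA : ∀ i : I, IsPresentable κ (DA.obj i)) :
    IsColimit (paCocone DA DB cA cB φ) := by
  haveI : (paI DA DB cA cB φ).Final := pa_final_I hκ hI hJc hcB presA
  haveI : (paJ DA DB cA cB φ).Final := pa_final_J hκ hI hJc hcB presA
  refine isColimitArrowOfComponents _ ?_ ?_
  · exact (Functor.Final.isColimitWhiskerEquiv (paI DA DB cA cB φ) cA).symm hcA
  · exact (Functor.Final.isColimitWhiskerEquiv (paJ DA DB cA cB φ) cB).symm hcB

end PA
section Repoint

variable {K : Type u} [Category.{v} K] {J : Type v} [SmallCategory J] {F : J ⥤ K}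

/-- Change the point of a cocone along an equality of objects. -/
def repointCocone (c : Cocone F) {X : K} (h : c.pt = X) : Cocone F where
  pt := X
  ι := c.ι ≫ (Functor.const J).map (eqToHom h)

noncomputable def repointIsColimit {c : Cocone F} (hc : IsColimit c) {X : K} (h : c.pt = X) :
    IsColimit (repointCocone c h) :=
  hc.ofIsoColimit (Cocones.ext (eqToIso h) (fun _ => rfl))

end Repoint

/-- **Remark 3.8 (2).** If `K` is class-`κ`-accessible then so is the morphism category
`K^→`; its `κ`-presentable objects are exactly the morphisms with `κ`-presentable domain
and codomain, both projections are strongly class-`κ`-accessible, and if `K` is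
class-locally `κ`-presentable then so is `K^→`. -/
theorem arrow_classAccessible (κ : Cardinal.{v}) (hκ : κ.IsRegular)
    {K : Type u} [Category.{v} K] (hK : ClassAccessible κ K) :
    ClassAccessible κ (Arrow K) ∧
      (∀ f : Arrow K, IsPresentable κ f ↔
        IsPresentable κ f.left ∧ IsPresentable κ f.right) ∧
      StronglyClassAccessibleFunctor κ (Arrow.leftFunc : Arrow K ⥤ K) ∧
      StronglyClassAccessibleFunctor κ (Arrow.rightFunc : Arrow K ⥤ K) ∧
      (ClassLocallyPresentable κ K → ClassLocallyPresentable κ (Arrow K)) := by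
  obtain ⟨hcolK, hpresK⟩ := hK
  have hκ0 : Cardinal.aleph0 ≤ κ := hκ.aleph0_le
  have colArrow : HasCardinalFilteredColimits κ (Arrow K) := by
    intro J _ hJ
    haveI := hcolK J hJ
    infer_instance
  have part2 : ∀ f : Arrow K, ∃ (E : Cat.{v, v}) (D : E ⥤ Arrow K) (c : Cocone D),
      IsCardinalFiltered (E : Type v) κ ∧ Nonempty (IsColimit c) ∧ c.pt = f ∧
      ∀ e, IsPresentable κ ((D.obj e).left) ∧ IsPresentable κ ((D.obj e).right) := by
    intro f
    obtain ⟨I, DA, cA0, hI, ⟨hcA0⟩, hptA, presA⟩ := hpresK f.left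
    obtain ⟨J, DB, cB0, hJc, ⟨hcB0⟩, hptB, presB⟩ := hpresK f.right
    let cA := repointCocone cA0 hptA
    have hcA : IsColimit cA := repointIsColimit hcA0 hptA
    let cB := repointCocone cB0 hptB
    have hcB : IsColimit cB := repointIsColimit hcB0 hptB
    letI : SmallCategory (PA DA DB cA cB f.hom) := instSmallCategoryPA
    refine ⟨Cat.of (PA DA DB cA cB f.hom), paDiagram DA DB cA cB f.hom,
      paCocone DA DB cA cB f.hom,
      pa_isCardinalFiltered hκ0 hI hJc hcB presA,
      ⟨paCoconeIsColimit hκ0 hI hJc hcA hcB presA⟩, rfl,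
      fun e => ⟨presA e.i, presB e.j⟩⟩
  have charBack : ∀ f : Arrow K, IsPresentable κ f.left → IsPresentable κ f.right →
      IsPresentable κ f := fun f h1 h2 => arrow_isPresentable_of_components hκ0 hcolK h1 h2
  have char : ∀ f : Arrow K, IsPresentable κ f ↔
      IsPresentable κ f.left ∧ IsPresentable κ f.right := by
    intro f
    constructor
    · intro hf
      obtain ⟨E, D, c, hE, ⟨hc⟩, hpt, hcomp⟩ := part2 f
      have hc' : IsColimit (repointCocone c hpt) := repointIsColimit hc hpt
      obtain ⟨j₀, h, hh⟩ := factor_of_isPresentable hf hE hc' (𝟙 f)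
      constructor
      · refine isPresentable_of_retract_s19 hκ0 h.left ((repointCocone c hpt).ι.app j₀).left
          ?_ (hcomp j₀).1
        exact (Arrow.comp_left _ _).symm.trans (congrArg Arrow.Hom.left hh)
      · refine isPresentable_of_retract_s19 hκ0 h.right ((repointCocone c hpt).ι.app j₀).right
          ?_ (hcomp j₀).2
        exact (Arrow.comp_right _ _).symm.trans (congrArg Arrow.Hom.right hh)
    · exact fun h => charBack f h.1 h.2
  have part2' : ∀ f : Arrow K, IsFilteredColimitOfPresentables κ f := by
    intro f
    obtain ⟨E, D, c, hE, hc, hpt, hcomp⟩ := part2 f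
    exact ⟨E, D, c, hE, hc, hpt, fun e => charBack (D.obj e) (hcomp e).1 (hcomp e).2⟩
  have accArrow : ClassAccessible κ (Arrow K) := ⟨colArrow, part2'⟩
  have presColL : PreservesCardinalFilteredColimits κ (Arrow.leftFunc : Arrow K ⥤ K) := by
    intro J _ hJ
    haveI := hcolK J hJ
    exact ⟨fun {D} => ⟨fun {c} hc => ⟨leftMapIsColimit hc⟩⟩⟩
  have presColR : PreservesCardinalFilteredColimits κ (Arrow.rightFunc : Arrow K ⥤ K) := by
    intro J _ hJ
    haveI := hcolK J hJ
    exact ⟨fun {D} => ⟨fun {c} hc => ⟨rightMapIsColimit hc⟩⟩⟩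
  refine ⟨accArrow, char, ⟨⟨accArrow, ⟨hcolK, hpresK⟩, presColL⟩,
    fun f hf => ((char f).mp hf).1⟩, ⟨⟨accArrow, ⟨hcolK, hpresK⟩, presColR⟩,
    fun f hf => ((char f).mp hf).2⟩, ?_⟩
  rintro ⟨-, hlim, hcolim⟩
  refine ⟨accArrow, ?_, ?_⟩
  · haveI : HasLimitsOfSize.{v, v} K := hlim
    infer_instance
  · haveI : HasColimitsOfSize.{v, v} K := hcolim
    infer_instance

end ClassAcc
end
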